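/- arXiv:2210.12788 — 8 statements merged into one kernel-verified Lean document; each statement's English description precedes it below -/
import Mathlib

section
/- Let G be a d-regular graph on n vertices with d ≥ 600 whose adjacency matrix A satisfies ‖A − (d/n)J‖ ≤ 2√(d−1); in particular, this holds for any d-regular Ramanujan graph, i.e. one all of whose adjacency eigenvalues other than d have absolute value at most 2√(d−1). Then every stable state of the homogeneous Kuramoto model on G is fully synchronized (hence G is globally synchronizing). -/
set_option maxHeartbeats 1000000


open Finset

noncomputable def opNorm {n : ℕ} (M : Matrix (Fin n) (Fin n) ℝ) : ℝ :=
  ‖LinearMap.toContinuousLinearMap (Matrix.toEuclideanLin M)‖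

def onesMat (n : ℕ) : Matrix (Fin n) (Fin n) ℝ := Matrix.of fun _ _ => 1

def IsAdjMatrix {n : ℕ} (A : Matrix (Fin n) (Fin n) ℝ) : Prop :=
  A.IsSymm ∧ (∀ x y, A x y = 0 ∨ A x y = 1) ∧ ∀ x, A x x = 0

def IsEquilibrium {n : ℕ} (A : Matrix (Fin n) (Fin n) ℝ) (θ : Fin n → ℝ) : Prop :=
  ∀ y, ∑ x, A x y * Real.sin (θ x - θ y) = 0

def IsStable {n : ℕ} (A : Matrix (Fin n) (Fin n) ℝ) (θ : Fin n → ℝ) : Prop :=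
  IsEquilibrium A θ ∧
    ∀ f : Fin n → ℝ, 0 ≤ ∑ x, ∑ y, A x y * Real.cos (θ x - θ y) * (f x - f y) ^ 2

def FullySync {n : ℕ} (θ : Fin n → ℝ) : Prop :=
  ∀ x y, ∃ k : ℤ, θ x - θ y = 2 * Real.pi * k

def IsExpander {n : ℕ} (A : Matrix (Fin n) (Fin n) ℝ) (d α : ℝ) : Prop :=
  opNorm (A - (d / n) • onesMat n) ≤ α * d

noncomputable def lapCentered {n : ℕ} (A : Matrix (Fin n) (Fin n) ℝ) (d : ℝ) :
    Matrix (Fin n) (Fin n) ℝ :=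
  Matrix.diagonal (fun x => ∑ y, A x y) - A - d • (1 : Matrix (Fin n) (Fin n) ℝ)
    + (d / n) • onesMat n

def IsExpander5 {n : ℕ} (A : Matrix (Fin n) (Fin n) ℝ) (d α cm cp : ℝ) : Prop :=
  IsExpander A d α ∧
    (lapCentered A d - (cm * d) • (1 : Matrix (Fin n) (Fin n) ℝ)).PosSemidef ∧
    ((cp * d) • (1 : Matrix (Fin n) (Fin n) ℝ) - lapCentered A d).PosSemidef

noncomputable def daido {n : ℕ} (k : ℕ) (θ : Fin n → ℝ) : ℂ :=
  (n : ℂ)⁻¹ * ∑ x, Complex.exp (Complex.I * k * θ x)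

noncomputable def sFun (t : ℝ) : ℝ := if |t| ≤ Real.pi / 2 then Real.sin t ^ 2 else 1

noncomputable def Cset {n : ℕ} (θ : Fin n → ℝ) (ψ : ℝ) : Finset (Fin n) :=
  Finset.univ.filter fun x => ψ ≤ |θ x|

def eXY {n : ℕ} (A : Matrix (Fin n) (Fin n) ℝ) (X Y : Finset (Fin n)) : ℝ :=
  ∑ x ∈ X, ∑ y ∈ Y, A x y

noncomputable def kerK (a b : ℝ) : ℝ := Real.sin (|a| - min |b| (Real.pi / 2))

def matGraph {n : ℕ} (A : Matrix (Fin n) (Fin n) ℝ) : SimpleGraph (Fin n) where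
  Adj x y := x ≠ y ∧ A x y = 1 ∧ A y x = 1
  symm := ⟨fun x y ⟨h1, h2, h3⟩ => ⟨h1.symm, h3, h2⟩⟩
  loopless := ⟨fun x ⟨h1, _⟩ => h1 rfl⟩

noncomputable def erMeasure (n : ℕ) (p : ℝ) (hp : p ≤ 1) :
    MeasureTheory.Measure ({e : Fin n × Fin n // e.1 < e.2} → Bool) :=
  MeasureTheory.Measure.pi fun _ =>
    (PMF.bernoulli (Real.toNNReal p) (Real.toNNReal_le_one.mpr hp)).toMeasure

def erAdj (n : ℕ) (ω : {e : Fin n × Fin n // e.1 < e.2} → Bool) :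
    Matrix (Fin n) (Fin n) ℝ :=
  Matrix.of fun x y =>
    if h : x < y then (if ω ⟨(x, y), h⟩ then 1 else 0)
    else if h : y < x then (if ω ⟨(y, x), h⟩ then 1 else 0) else 0

lemma opNorm_nonneg {n : ℕ} (M : Matrix (Fin n) (Fin n) ℝ) : 0 ≤ opNorm M :=
  norm_nonneg _

lemma mulVec_sumSq_le {n : ℕ} (M : Matrix (Fin n) (Fin n) ℝ) (f : Fin n → ℝ) :
    ∑ y, (M.mulVec f y) ^ 2 ≤ (opNorm M) ^ 2 * ∑ i, (f i) ^ 2 := by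
  set x : EuclideanSpace ℝ (Fin n) := (WithLp.equiv 2 (Fin n → ℝ)).symm f with hx
  have h1 : ‖(LinearMap.toContinuousLinearMap (Matrix.toEuclideanLin M)) x‖
      ≤ opNorm M * ‖x‖ := ContinuousLinearMap.le_opNorm _ _
  have happ : (LinearMap.toContinuousLinearMap (Matrix.toEuclideanLin M)) x
      = (WithLp.equiv 2 (Fin n → ℝ)).symm (M.mulVec f) := by
    simp [x, Matrix.toEuclideanLin_apply]
  rw [happ] at h1
  have hn1 : ‖(WithLp.equiv 2 (Fin n → ℝ)).symm (M.mulVec f)‖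
      = Real.sqrt (∑ y, (M.mulVec f y) ^ 2) := by
    rw [EuclideanSpace.norm_eq]
    congr 1
    refine Finset.sum_congr rfl fun i _ => ?_
    simp [Real.norm_eq_abs, sq_abs]
  have hn2 : ‖x‖ = Real.sqrt (∑ i, (f i) ^ 2) := by
    rw [hx, EuclideanSpace.norm_eq]
    congr 1
    refine Finset.sum_congr rfl fun i _ => ?_
    simp [Real.norm_eq_abs, sq_abs]
  rw [hn1, hn2] at h1
  have h2 : Real.sqrt (∑ y, (M.mulVec f y) ^ 2) ^ 2 ≤ (opNorm M * Real.sqrt (∑ i, (f i) ^ 2)) ^ 2 := by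
    apply pow_le_pow_left₀ (Real.sqrt_nonneg _) h1
  rw [Real.sq_sqrt (by positivity)] at h2
  calc ∑ y, (M.mulVec f y) ^ 2 ≤ (opNorm M * Real.sqrt (∑ i, (f i) ^ 2)) ^ 2 := h2
    _ = (opNorm M)^2 * ∑ i, (f i)^2 := by
        rw [mul_pow, Real.sq_sqrt (by positivity)]

lemma abs_quadForm_le {n : ℕ} (M : Matrix (Fin n) (Fin n) ℝ) (f : Fin n → ℝ) :
    |∑ y, f y * M.mulVec f y| ≤ opNorm M * ∑ i, (f i) ^ 2 := by
  have h1 : (∑ y, f y * M.mulVec f y) ^ 2 ≤ (∑ i, (f i)^2) * ∑ y, (M.mulVec f y)^2 :=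
    Finset.sum_mul_sq_le_sq_mul_sq _ _ _
  have h2 : (∑ i, (f i)^2) * (∑ y, (M.mulVec f y)^2) ≤ (opNorm M * ∑ i, (f i)^2)^2 := by
    calc (∑ i, (f i)^2) * (∑ y, (M.mulVec f y)^2)
        ≤ (∑ i, (f i)^2) * ((opNorm M)^2 * ∑ i, (f i)^2) := by
          apply mul_le_mul_of_nonneg_left (mulVec_sumSq_le M f) (by positivity)
      _ = (opNorm M * ∑ i, (f i)^2)^2 := by ring
  have h3 := h1.trans h2
  have h4 := Real.sqrt_le_sqrt h3
  rw [Real.sqrt_sq_eq_abs, Real.sqrt_sq (mul_nonneg (opNorm_nonneg M) (by positivity))] at h4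
  exact h4


lemma abs_sin_le_min (t : ℝ) : |Real.sin t| ≤ min |t| 1 :=
  le_min Real.abs_sin_le_abs (Real.abs_sin_le_one t)

lemma one_sub_cos_sq_le (t : ℝ) : (Real.cos t - 1) ^ 2 ≤ 4 * (min |t| 1) ^ 2 := by
  have h1 : Real.sin (t/2) ^ 2 = 1/2 - Real.cos t / 2 := by
    have := Real.sin_sq_eq_half_sub (t/2)
    rwa [show 2 * (t/2) = t by ring] at this
  have h2 : Real.cos t - 1 = -(2 * Real.sin (t/2)^2) := by rw [h1]; ring
  rw [h2]
  have h3 : |Real.sin (t/2)| ≤ min |t/2| 1 := abs_sin_le_min _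
  have h4 : min |t/2| 1 ≤ min |t| 1 := by
    apply min_le_min _ le_rfl
    rw [abs_div]
    simp only [abs_two]
    linarith [abs_nonneg t, abs_div t 2]
  have h5 : Real.sin (t/2)^2 ≤ min |t| 1 := by
    have hs1 : Real.sin (t/2)^2 ≤ |Real.sin (t/2)| := by
      nlinarith [Real.abs_sin_le_one (t/2), abs_nonneg (Real.sin (t/2)), sq_abs (Real.sin (t/2))]
    exact hs1.trans (h3.trans h4)
  have h6 : 0 ≤ Real.sin (t/2)^2 := sq_nonneg _
  have h7 : 0 ≤ min |t| 1 := le_min (abs_nonneg t) zero_le_one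
  nlinarith
lemma key_trig {a : ℝ} (h0 : 0 ≤ a) (hpi : a ≤ Real.pi) :
    (3/5 : ℝ) * min a 1 ≤ max (Real.sin a) (-Real.cos a) := by
  rcases le_total a (Real.pi/2) with h | h
  · refine le_trans ?_ (le_max_left _ _)
    have hj := Real.mul_le_sin h0 h
    have hpi4 : Real.pi ≤ 3.15 := by linarith [Real.pi_lt_d2]
    have h2 : (3/5 : ℝ) ≤ 2 / Real.pi := by
      rw [le_div_iff₀ Real.pi_pos]; linarith
    calc (3/5:ℝ) * min a 1 ≤ (3/5) * a := by
          apply mul_le_mul_of_nonneg_left (min_le_left _ _) (by norm_num)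
      _ ≤ 2/Real.pi * a := mul_le_mul_of_nonneg_right h2 h0
      _ ≤ Real.sin a := hj
  · obtain ⟨b, hb⟩ : ∃ b : ℝ, b = a - Real.pi/2 := ⟨_, rfl⟩
    have hb0 : 0 ≤ b := by rw [hb]; linarith
    have hb2 : b ≤ Real.pi/2 := by rw [hb]; linarith
    have hsin : Real.sin a = Real.cos b := by
      rw [← Real.cos_pi_div_two_sub, show Real.pi/2 - a = -b by rw [hb]; ring, Real.cos_neg]
    have hcos : -Real.cos a = Real.sin b := by
      rw [← Real.sin_pi_div_two_sub, show Real.pi/2 - a = -b by rw [hb]; ring, Real.sin_neg, neg_neg]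
    have hsb : 0 ≤ Real.sin b := Real.sin_nonneg_of_nonneg_of_le_pi hb0 (by linarith [Real.pi_pos, Real.pi_le_four])
    have hcb : 0 ≤ Real.cos b := Real.cos_nonneg_of_mem_Icc ⟨by linarith, hb2⟩
    have hmax : (3/5:ℝ) ≤ max (Real.cos b) (Real.sin b) := by
      by_contra hcon
      push_neg at hcon
      have h1 : Real.cos b < 3/5 := lt_of_le_of_lt (le_max_left _ _) hcon
      have h2 : Real.sin b < 3/5 := lt_of_le_of_lt (le_max_right _ _) hcon
      nlinarith [Real.sin_sq_add_cos_sq b]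
    rw [hsin, hcos]
    calc (3/5:ℝ) * min a 1 ≤ (3/5) * 1 := by
          apply mul_le_mul_of_nonneg_left (min_le_right _ _) (by norm_num)
      _ = 3/5 := mul_one _
      _ ≤ max (Real.cos b) (Real.sin b) := hmax

lemma mulVec_decomp {n : ℕ} (hn : 0 < n) (A : Matrix (Fin n) (Fin n) ℝ) (D : ℝ)
    (g : Fin n → ℝ) (y : Fin n) :
    A.mulVec g y = (A - (D / n) • onesMat n).mulVec g y + D / n * ∑ x, g x := by
  have h : ((D / (n:ℝ)) • onesMat n).mulVec g y = D / n * ∑ x, g x := by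
    rw [Matrix.smul_mulVec]
    simp [Matrix.mulVec, dotProduct, onesMat, Finset.mul_sum]
  rw [Matrix.sub_mulVec]
  simp only [Pi.sub_apply, h]
  ring

lemma quadForm_A {n : ℕ} (hn : 0 < n) (A : Matrix (Fin n) (Fin n) ℝ) (D : ℝ)
    (f : Fin n → ℝ) :
    ∑ x, f x * A.mulVec f x
      = ∑ x, f x * (A - (D / n) • onesMat n).mulVec f x + D / n * (∑ x, f x) ^ 2 := by
  have h : ∀ x, f x * A.mulVec f x
      = f x * (A - (D / n) • onesMat n).mulVec f x + D / n * f x * ∑ x', f x' := by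
    intro x; rw [mulVec_decomp hn A D f x]; ring
  rw [Finset.sum_congr rfl (fun x _ => h x), Finset.sum_add_distrib]
  congr 1
  have h2 : ∀ x : Fin n, D / (n:ℝ) * f x * (∑ x', f x') = (∑ x', f x') * (D/n) * f x := by
    intro x; ring
  rw [Finset.sum_congr rfl (fun x _ => h2 x), ← Finset.mul_sum]
  ring

-- step A
lemma stepA {n : ℕ} (hn : 0 < n) (A : Matrix (Fin n) (Fin n) ℝ) (d : ℕ)
    (hreg : ∀ x, ∑ y, A x y = (d : ℝ))
    (θ : Fin n → ℝ)
    (hstab : ∀ f : Fin n → ℝ,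
      0 ≤ ∑ x, ∑ y, A x y * Real.cos (θ x - θ y) * (f x - f y) ^ 2) :
    (n : ℝ)^2 * ((d:ℝ) - 3 * opNorm (A - ((d:ℝ) / n) • onesMat n))
      ≤ 2 * (d:ℝ) * ((∑ x, Real.cos (θ x))^2 + (∑ x, Real.sin (θ x))^2) := by
  set D := (d : ℝ) with hD
  set Δ := A - (D / n) • onesMat n with hΔ
  set γ := opNorm Δ with hγ
  set c := fun x => Real.cos (θ x) with hc
  set s := fun x => Real.sin (θ x) with hs
  set c2 := fun x => Real.cos (2 * θ x) with hc2
  set s2 := fun x => Real.sin (2 * θ x) with hs2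
  have hN : (0:ℝ) < n := by exact_mod_cast hn
  -- quadratic form expansions
  have hsum_one : ∀ (f : Fin n → ℝ) (g : Fin n → ℝ),
      ∑ x, ∑ y, A x y * (f x * f y + g x * g y)
        = ∑ x, f x * A.mulVec f x + ∑ x, g x * A.mulVec g x := by
    intro f g
    rw [← Finset.sum_add_distrib]
    apply Finset.sum_congr rfl; intro x _
    simp only [Matrix.mulVec, dotProduct]
    rw [Finset.mul_sum, Finset.mul_sum, ← Finset.sum_add_distrib]
    apply Finset.sum_congr rfl; intro y _; ring
  have hT1 : ∑ x, ∑ y, A x y * Real.cos (θ x - θ y)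
      = ∑ x, c x * A.mulVec c x + ∑ x, s x * A.mulVec s x := by
    rw [← hsum_one c s]
    apply Finset.sum_congr rfl; intro x _
    apply Finset.sum_congr rfl; intro y _
    rw [Real.cos_sub]
  have hT2 : ∑ x, ∑ y, A x y * Real.cos (2 * θ x - 2 * θ y)
      = ∑ x, c2 x * A.mulVec c2 x + ∑ x, s2 x * A.mulVec s2 x := by
    rw [← hsum_one c2 s2]
    apply Finset.sum_congr rfl; intro x _
    apply Finset.sum_congr rfl; intro y _
    rw [Real.cos_sub]
  -- norms
  have hnorm1 : ∑ x, (c x)^2 + ∑ x, (s x)^2 = (n:ℝ) := by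
    rw [← Finset.sum_add_distrib]
    have : ∀ x : Fin n, (c x)^2 + (s x)^2 = 1 := by
      intro x; simp only [hc, hs]; rw [add_comm]; exact Real.sin_sq_add_cos_sq (θ x)
    rw [Finset.sum_congr rfl (fun x _ => this x)]
    simp
  have hnorm2 : ∑ x, (c2 x)^2 + ∑ x, (s2 x)^2 = (n:ℝ) := by
    rw [← Finset.sum_add_distrib]
    have : ∀ x : Fin n, (c2 x)^2 + (s2 x)^2 = 1 := by
      intro x; simp only [hc2, hs2]; rw [add_comm]; exact Real.sin_sq_add_cos_sq _
    rw [Finset.sum_congr rfl (fun x _ => this x)]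
    simp
  -- bounds on T1 and T2
  have hboundf : ∀ f : Fin n → ℝ, ∑ x, f x * A.mulVec f x
      ≤ γ * ∑ x, (f x)^2 + D / n * (∑ x, f x)^2 := by
    intro f
    rw [quadForm_A hn A D f, ← hΔ]
    have := abs_le.mp (abs_quadForm_le Δ f)
    linarith [this.2]
  have hboundf' : ∀ f : Fin n → ℝ, -(γ * ∑ x, (f x)^2) + D / n * (∑ x, f x)^2
      ≤ ∑ x, f x * A.mulVec f x := by
    intro f
    rw [quadForm_A hn A D f, ← hΔ]
    have := abs_le.mp (abs_quadForm_le Δ f)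
    linarith [this.1]
  have hDpos : (0:ℝ) ≤ D / n := by positivity
  have hT1le : ∑ x, ∑ y, A x y * Real.cos (θ x - θ y)
      ≤ D / n * ((∑ x, c x)^2 + (∑ x, s x)^2) + γ * n := by
    rw [hT1]
    have h1 := hboundf c
    have h2 := hboundf s
    have h3 : γ * (∑ x, (c x)^2) + γ * (∑ x, (s x)^2) = γ * n := by
      rw [← mul_add, hnorm1]
    linarith
  have hT2ge : -(γ * n) ≤ ∑ x, ∑ y, A x y * Real.cos (2 * θ x - 2 * θ y) := by
    rw [hT2]
    have h1 := hboundf' c2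
    have h2 := hboundf' s2
    have h3 : γ * (∑ x, (c2 x)^2) + γ * (∑ x, (s2 x)^2) = γ * n := by
      rw [← mul_add, hnorm2]
    nlinarith [sq_nonneg (∑ x, c2 x), sq_nonneg (∑ x, s2 x), hDpos,
      mul_nonneg hDpos (sq_nonneg (∑ x, c2 x)), mul_nonneg hDpos (sq_nonneg (∑ x, s2 x))]
  -- stability applied to c and s
  have hstabcs : 0 ≤ ∑ x, ∑ y, A x y * Real.cos (θ x - θ y) * (2 - 2 * Real.cos (θ x - θ y)) := by
    have h1 := hstab c
    have h2 := hstab s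
    have key : ∑ x, ∑ y, A x y * Real.cos (θ x - θ y) * (2 - 2*Real.cos (θ x - θ y))
        = (∑ x, ∑ y, A x y * Real.cos (θ x - θ y) * (c x - c y)^2)
          + ∑ x, ∑ y, A x y * Real.cos (θ x - θ y) * (s x - s y)^2 := by
      rw [← Finset.sum_add_distrib]
      apply Finset.sum_congr rfl; intro x _
      rw [← Finset.sum_add_distrib]
      apply Finset.sum_congr rfl; intro y _
      have hpt : (c x - c y)^2 + (s x - s y)^2 = 2 - 2 * Real.cos (θ x - θ y) := by
        rw [Real.cos_sub]
        simp only [hc, hs]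
        linear_combination Real.sin_sq_add_cos_sq (θ x) + Real.sin_sq_add_cos_sq (θ y)
      linear_combination (-(A x y * Real.cos (θ x - θ y))) * hpt
    rw [key]; linarith
  -- rewrite cos^2 via double angle
  have hcossq : ∑ x, ∑ y, A x y * Real.cos (θ x - θ y) * (2 - 2 * Real.cos (θ x - θ y))
      = 2 * (∑ x, ∑ y, A x y * Real.cos (θ x - θ y))
        - ((∑ x, ∑ y, A x y) + ∑ x, ∑ y, A x y * Real.cos (2*θ x - 2*θ y)) := by
    have hpt : ∀ x y : Fin n, A x y * Real.cos (θ x - θ y) * (2 - 2 * Real.cos (θ x - θ y))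
        = 2 * (A x y * Real.cos (θ x - θ y)) - (A x y + A x y * Real.cos (2*θ x - 2*θ y)) := by
      intro x y
      have hc2' : Real.cos (θ x - θ y) ^ 2 = 1/2 + Real.cos (2*θ x - 2*θ y) / 2 := by
        have := Real.cos_sq (θ x - θ y)
        rwa [show 2 * (θ x - θ y) = 2*θ x - 2*θ y by ring] at this
      linear_combination (-2 * A x y) * hc2'
    calc ∑ x, ∑ y, A x y * Real.cos (θ x - θ y) * (2 - 2 * Real.cos (θ x - θ y))
        = ∑ x, ∑ y, (2 * (A x y * Real.cos (θ x - θ y))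
            - (A x y + A x y * Real.cos (2*θ x - 2*θ y))) := by
          apply Finset.sum_congr rfl; intro x _
          apply Finset.sum_congr rfl; intro y _
          exact hpt x y
      _ = 2 * (∑ x, ∑ y, A x y * Real.cos (θ x - θ y))
          - ((∑ x, ∑ y, A x y) + ∑ x, ∑ y, A x y * Real.cos (2*θ x - 2*θ y)) := by
          simp only [Finset.sum_sub_distrib, Finset.sum_add_distrib, ← Finset.mul_sum]
  have hAsum : ∑ x, ∑ y, A x y = (n:ℝ) * D := by
    rw [Finset.sum_congr rfl (fun x _ => hreg x)]
    simp [mul_comm]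
  have hfinal : (n:ℝ) * D + ∑ x, ∑ y, A x y * Real.cos (2*θ x - 2*θ y)
      ≤ 2 * ∑ x, ∑ y, A x y * Real.cos (θ x - θ y) := by
    rw [hcossq, hAsum] at hstabcs
    linarith
  set Q := (∑ x, c x)^2 + (∑ x, s x)^2 with hQ
  have hmain : (n:ℝ) * D - 3 * γ * n ≤ 2 * (D / n * Q) := by
    linarith [hT1le, hT2ge, hfinal]
  have hq : D / n * Q * n = D * Q := by field_simp
  nlinarith [mul_le_mul_of_nonneg_right hmain hN.le]

lemma master {n : ℕ} (hn : 0 < n) (A : Matrix (Fin n) (Fin n) ℝ)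
    (hA : IsAdjMatrix A) (d : ℕ) (hd : 600 ≤ d)
    (hreg : ∀ x, ∑ y, A x y = (d : ℝ))
    (hexp : opNorm (A - ((d : ℝ) / n) • onesMat n) ≤ 2 * Real.sqrt ((d : ℝ) - 1))
    (θ : Fin n → ℝ)
    (hequi : ∀ y, ∑ x, A x y * Real.sin (θ x - θ y) = 0)
    (hstab : ∀ f : Fin n → ℝ,
      0 ≤ ∑ x, ∑ y, A x y * Real.cos (θ x - θ y) * (f x - f y) ^ 2)
    (hrange : ∀ x, |θ x| ≤ Real.pi)
    (hSs : ∑ x, Real.sin (θ x) = 0)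
    (hSc : (n : ℝ) * Real.sqrt (1/2 - 3 * Real.sqrt ((d:ℝ) - 1) / d)
        ≤ ∑ x, Real.cos (θ x)) :
    ∀ x, θ x = 0 := by
  set D := (d : ℝ) with hD
  have hD6 : (600:ℝ) ≤ D := by rw [hD]; exact_mod_cast hd
  have hN : (0:ℝ) < n := by exact_mod_cast hn
  set Δ := A - (D / n) • onesMat n with hΔ
  set γ := opNorm Δ with hγ
  have hγ0 : 0 ≤ γ := norm_nonneg _
  set s := fun x => Real.sin (θ x) with hs
  set c1 := fun x => Real.cos (θ x) - 1 with hc1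
  set u := Δ.mulVec s with hu
  set v := Δ.mulVec c1 with hv
  set P := ∑ x, Real.cos (θ x) with hP
  set q := D / n * P with hq
  set ρ := Real.sqrt (1/2 - 3 * Real.sqrt (D - 1) / D) with hρ
  -- basic numeric facts
  have hsqD : Real.sqrt (D - 1) ≤ D / 24 := by
    have h1 : Real.sqrt (D - 1) ≤ Real.sqrt D := Real.sqrt_le_sqrt (by linarith)
    have h24 : (24:ℝ) ≤ Real.sqrt D := by
      have : ((24:ℝ))^2 ≤ D := by norm_num; linarith
      nlinarith [Real.sq_sqrt (by linarith : (0:ℝ) ≤ D), Real.sqrt_nonneg D, this]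
    have h2 : Real.sqrt D ≤ D / 24 := by
      rw [le_div_iff₀ (by norm_num : (0:ℝ) < 24)]
      nlinarith [Real.sq_sqrt (by linarith : (0:ℝ) ≤ D), h24]
    linarith
  have hρsq : ρ^2 = 1/2 - 3 * Real.sqrt (D - 1) / D := by
    rw [hρ, Real.sq_sqrt]
    have : 3 * Real.sqrt (D - 1) / D ≤ 3 / 24 := by
      rw [div_le_div_iff₀ (by linarith) (by norm_num)]
      nlinarith [hsqD]
    linarith
  have hρ38 : (3:ℝ)/8 ≤ ρ^2 := by
    rw [hρsq]
    have : 3 * Real.sqrt (D - 1) / D ≤ 3 / 24 := by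
      rw [div_le_div_iff₀ (by linarith) (by norm_num)]
      nlinarith [hsqD]
    linarith
  have hρ0 : 0 ≤ ρ := Real.sqrt_nonneg _
  -- q ≥ D * ρ > 0
  have hqge : D * ρ ≤ q := by
    rw [hq]
    rw [show D / (n:ℝ) * P = D * (P / n) by ring]
    apply mul_le_mul_of_nonneg_left _ (by linarith)
    rw [le_div_iff₀ hN]
    rw [mul_comm]
    exact_mod_cast hSc
  have hq0 : 0 ≤ q := le_trans (by positivity) hqge
  -- mulVec facts
  have hAs : ∀ y, A.mulVec s y = u y := by
    intro y
    rw [mulVec_decomp hn A D s y, ← hΔ, ← hu]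
    simp [hs, hSs]
    exact Or.inr hSs
  have hAc : ∀ y, A.mulVec (fun x => Real.cos (θ x)) y = v y + q := by
    intro y
    rw [mulVec_decomp hn A D _ y, ← hΔ]
    have hsplit : (fun x => Real.cos (θ x)) = fun x => c1 x + 1 := by
      funext x; simp [hc1]
    rw [hsplit]
    have h1 : Δ.mulVec (fun x => c1 x + 1) y = v y + Δ.mulVec (fun _ => (1:ℝ)) y := by
      have : (fun x => c1 x + 1) = c1 + (fun _ => (1:ℝ)) := by funext x; simp
      rw [this, Matrix.mulVec_add]; simp [hv]
    have h2 : Δ.mulVec (fun _ => (1:ℝ)) y = 0 := by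
      have := mulVec_decomp hn A D (fun _ => (1:ℝ)) y
      rw [← hΔ] at this
      have hAone : A.mulVec (fun _ => (1:ℝ)) y = D := by
        simp [Matrix.mulVec, dotProduct, hreg y]
      have hsum1 : ∑ _x : Fin n, (1:ℝ) = n := by simp
      have hDn : D / (n:ℝ) * (n:ℝ) = D := by field_simp
      rw [hAone, hsum1, hDn] at this
      linarith
    rw [h1, h2]
    have hsum : ∑ x, (c1 x + 1) = P - n + n := by
      rw [Finset.sum_add_distrib]
      simp [hc1, hP, Finset.sum_sub_distrib]
    rw [hsum]
    have : D / (n:ℝ) * (P - (n:ℝ) + n) = q := by rw [hq]; ring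
    rw [this]; ring
  -- per-vertex equilibrium identity
  have hE1 : ∀ y, q * Real.sin (θ y) = Real.cos (θ y) * u y - Real.sin (θ y) * v y := by
    intro y
    have h0 := hequi y
    have hexpand : ∑ x, A x y * Real.sin (θ x - θ y)
        = Real.cos (θ y) * A.mulVec s y - Real.sin (θ y) * A.mulVec (fun x => Real.cos (θ x)) y := by
      rw [Matrix.mulVec, Matrix.mulVec]
      simp only [dotProduct]
      rw [Finset.mul_sum, Finset.mul_sum, ← Finset.sum_sub_distrib]
      apply Finset.sum_congr rfl; intro x _
      rw [Real.sin_sub, hA.1.apply x y]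
      simp only [hs]; ring
    rw [hexpand, hAs y, hAc y] at h0
    linarith [h0]
  -- per-vertex stability
  have hE2 : ∀ y, 0 ≤ Real.cos (θ y) * (v y + q) + Real.sin (θ y) * u y := by
    intro y
    have hδ := hstab (fun x => if x = y then (1:ℝ) else 0)
    have hcompute : ∑ x, ∑ y', A x y' * Real.cos (θ x - θ y') *
        ((if x = y then (1:ℝ) else 0) - if y' = y then (1:ℝ) else 0) ^ 2
        = 2 * ∑ x, A x y * Real.cos (θ x - θ y) := by
      have hterm : ∀ x y' : Fin n, A x y' * Real.cos (θ x - θ y') *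
          ((if x = y then (1:ℝ) else 0) - if y' = y then (1:ℝ) else 0) ^ 2
          = (if x = y then A x y' * Real.cos (θ x - θ y') else 0)
            + (if y' = y then A x y' * Real.cos (θ x - θ y') else 0)
            - 2 * (if x = y then (if y' = y then A x y' * Real.cos (θ x - θ y') else 0) else 0) := by
        intro x y'
        by_cases h1 : x = y <;> by_cases h2 : y' = y <;> simp [h1, h2] <;> ring
      have hstep : ∑ x, ∑ y', A x y' * Real.cos (θ x - θ y') *
          ((if x = y then (1:ℝ) else 0) - if y' = y then (1:ℝ) else 0) ^ 2
          = (∑ y', A y y' * Real.cos (θ y - θ y'))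
            + (∑ x, A x y * Real.cos (θ x - θ y))
            - 2 * (A y y * Real.cos (θ y - θ y)) := by
        rw [Finset.sum_congr rfl (fun x _ => Finset.sum_congr rfl (fun y' _ => hterm x y'))]
        simp [Finset.sum_sub_distrib, Finset.sum_add_distrib, Finset.sum_ite_irrel,
          Finset.sum_ite_eq', Finset.mul_sum]
      rw [hstep, hA.2.2 y]
      have hswap : ∑ y', A y y' * Real.cos (θ y - θ y') = ∑ x, A x y * Real.cos (θ x - θ y) := by
        apply Finset.sum_congr rfl; intro x _
        rw [hA.1.apply y x, ← Real.cos_neg, neg_sub]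
      rw [hswap]; ring
    rw [hcompute] at hδ
    have hexpand : ∑ x, A x y * Real.cos (θ x - θ y)
        = Real.cos (θ y) * A.mulVec (fun x => Real.cos (θ x)) y + Real.sin (θ y) * A.mulVec s y := by
      rw [Matrix.mulVec, Matrix.mulVec]
      simp only [dotProduct]
      rw [Finset.mul_sum, Finset.mul_sum, ← Finset.sum_add_distrib]
      apply Finset.sum_congr rfl; intro x _
      rw [Real.cos_sub, hA.1.apply x y]
      simp only [hs]; ring
    rw [hexpand, hAs y, hAc y] at hδ
    linarith
  -- per-vertex min bound
  set m := fun y : Fin n => min |θ y| 1 with hm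
  have hE3 : ∀ y, q * ((3/5) * m y) ≤ |u y| + |v y| := by
    intro y
    have ha0 : 0 ≤ |θ y| := abs_nonneg _
    have hap : |θ y| ≤ Real.pi := hrange y
    have htrig := key_trig ha0 hap
    have hsin_eq : Real.sin |θ y| = |Real.sin (θ y)| := by
      rcases le_total 0 (θ y) with h | h
      · rw [abs_of_nonneg h, abs_of_nonneg]
        exact Real.sin_nonneg_of_nonneg_of_le_pi h (le_trans (le_abs_self _) hap)
      · have hnegpi : -θ y ≤ Real.pi := by
          rw [abs_of_nonpos h] at hap; exact hap
        have hnp : 0 ≤ Real.sin (-θ y) :=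
          Real.sin_nonneg_of_nonneg_of_le_pi (neg_nonneg.mpr h) hnegpi
        rw [Real.sin_neg] at hnp
        rw [abs_of_nonpos h, Real.sin_neg, abs_of_nonpos (by linarith)]
    have hcos_eq : Real.cos |θ y| = Real.cos (θ y) := by
      rcases le_total 0 (θ y) with h | h
      · rw [abs_of_nonneg h]
      · rw [abs_of_nonpos h, Real.cos_neg]
    -- q * sin|θy| ≤ |u y| + |v y|
    have hb1 : q * Real.sin |θ y| ≤ |u y| + |v y| := by
      rw [hsin_eq]
      have := hE1 y
      have habs : |q * Real.sin (θ y)| ≤ |u y| + |v y| := by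
        rw [this]
        calc |Real.cos (θ y) * u y - Real.sin (θ y) * v y|
            ≤ |Real.cos (θ y) * u y| + |Real.sin (θ y) * v y| := abs_sub _ _
          _ ≤ |u y| + |v y| := by
              rw [abs_mul, abs_mul]
              have h1 : |Real.cos (θ y)| ≤ 1 := Real.abs_cos_le_one _
              have h2 : |Real.sin (θ y)| ≤ 1 := Real.abs_sin_le_one _
              nlinarith [abs_nonneg (u y), abs_nonneg (v y), abs_nonneg (Real.cos (θ y)), abs_nonneg (Real.sin (θ y))]
      calc q * |Real.sin (θ y)| = |q * Real.sin (θ y)| := by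
            rw [abs_mul, abs_of_nonneg hq0]
        _ ≤ |u y| + |v y| := habs
    have hb2 : q * (-Real.cos |θ y|) ≤ |u y| + |v y| := by
      rw [hcos_eq]
      have h0 := hE2 y
      have h1 : -(q * Real.cos (θ y)) ≤ Real.cos (θ y) * v y + Real.sin (θ y) * u y := by linarith
      have h2 : Real.cos (θ y) * v y + Real.sin (θ y) * u y ≤ |u y| + |v y| := by
        have := abs_add_le (Real.cos (θ y) * v y) (Real.sin (θ y) * u y)
        have h3 : |Real.cos (θ y) * v y + Real.sin (θ y) * u y| ≤ |u y| + |v y| := by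
          rw [abs_mul, abs_mul] at *
          have hc : |Real.cos (θ y)| ≤ 1 := Real.abs_cos_le_one _
          have hsn : |Real.sin (θ y)| ≤ 1 := Real.abs_sin_le_one _
          nlinarith [abs_nonneg (u y), abs_nonneg (v y), abs_nonneg (Real.cos (θ y)), abs_nonneg (Real.sin (θ y))]
        linarith [le_abs_self (Real.cos (θ y) * v y + Real.sin (θ y) * u y)]
      linarith
    have hmax : q * max (Real.sin |θ y|) (-Real.cos |θ y|) ≤ |u y| + |v y| := by
      rcases max_cases (Real.sin |θ y|) (-Real.cos |θ y|) with ⟨heq, _⟩ | ⟨heq, _⟩ <;>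
        rw [heq]
      · exact hb1
      · exact hb2
    calc q * ((3/5) * m y) ≤ q * max (Real.sin |θ y|) (-Real.cos |θ y|) :=
          mul_le_mul_of_nonneg_left htrig hq0
      _ ≤ |u y| + |v y| := hmax
  -- sum of squares
  set M := ∑ y, (m y)^2 with hM
  have hM0 : 0 ≤ M := Finset.sum_nonneg (fun y _ => sq_nonneg _)
  have hsumE : ∑ y, (q * ((3/5) * m y))^2 ≤ ∑ y, 2 * ((u y)^2 + (v y)^2) := by
    apply Finset.sum_le_sum
    intro y _
    have h1 := hE3 y
    have h2 : 0 ≤ q * ((3/5) * m y) := by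
      apply mul_nonneg hq0
      apply mul_nonneg (by norm_num)
      exact le_min (abs_nonneg _) zero_le_one
    nlinarith [sq_nonneg (|u y| - |v y|), sq_abs (u y), sq_abs (v y), abs_nonneg (u y), abs_nonneg (v y)]
  have hLHS : ∑ y, (q * ((3/5) * m y))^2 = q^2 * (9/25) * M := by
    rw [hM, Finset.mul_sum]
    apply Finset.sum_congr rfl; intro y _; ring
  have hsq_s : ∑ x, (s x)^2 ≤ M := by
    apply Finset.sum_le_sum
    intro y _
    have := abs_sin_le_min (θ y)
    have h2 : (s y)^2 = |Real.sin (θ y)|^2 := by rw [sq_abs]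
    rw [h2]
    apply pow_le_pow_left₀ (abs_nonneg _) this
  have hsq_c : ∑ x, (c1 x)^2 ≤ 4 * M := by
    rw [hM, Finset.mul_sum]
    apply Finset.sum_le_sum
    intro y _
    exact one_sub_cos_sq_le (θ y)
  have hRHS : ∑ y, 2 * ((u y)^2 + (v y)^2) ≤ 10 * γ^2 * M := by
    have h1 : ∑ y, (u y)^2 ≤ γ^2 * ∑ x, (s x)^2 := mulVec_sumSq_le Δ s
    have h2 : ∑ y, (v y)^2 ≤ γ^2 * ∑ x, (c1 x)^2 := mulVec_sumSq_le Δ c1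
    have h3 : ∑ y, 2 * ((u y)^2 + (v y)^2) = 2 * (∑ y, (u y)^2) + 2 * (∑ y, (v y)^2) := by
      rw [Finset.mul_sum, Finset.mul_sum, ← Finset.sum_add_distrib]
      apply Finset.sum_congr rfl; intro y _; ring
    rw [h3]
    have hγsq : 0 ≤ γ^2 := sq_nonneg _
    nlinarith [hsq_s, hsq_c, mul_le_mul_of_nonneg_left hsq_s hγsq, mul_le_mul_of_nonneg_left hsq_c hγsq]
  -- numeric contradiction
  have hγle : γ^2 ≤ 4 * (D - 1) := by
    have h : γ ≤ 2 * Real.sqrt (D - 1) := hexp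
    have h2 : (2 * Real.sqrt (D - 1))^2 = 4 * (D - 1) := by
      rw [mul_pow, Real.sq_sqrt (by linarith)]
      ring
    nlinarith [hγ0, Real.sqrt_nonneg (D - 1), h, h2]
  have hqsq : D^2 * ρ^2 ≤ q^2 := by
    have hDρ : 0 ≤ D * ρ := mul_nonneg (by linarith) hρ0
    have := pow_le_pow_left₀ hDρ hqge 2
    calc D^2 * ρ^2 = (D*ρ)^2 := by ring
      _ ≤ q^2 := this
  have hcoef : 10 * γ^2 < q^2 * (9/25) := by
    have h1 : q^2 * (9/25) ≥ D^2 * (1/2 - 3*Real.sqrt (D-1)/D) * (9/25) := by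
      rw [← hρsq]; nlinarith [hqsq]
    have h2 : D^2 * (1/2 - 3*Real.sqrt (D-1)/D) * (9/25) > 10 * (4 * (D-1)) := by
      have hs24 : Real.sqrt (D - 1) ≤ D / 24 := hsqD
      have hDsq : D^2 * (3 * Real.sqrt (D-1) / D) = 3 * D * Real.sqrt (D-1) := by
        field_simp
      nlinarith [hs24, hD6]
    linarith
  have hMzero : M = 0 := by
    have hle : q^2 * (9/25) * M ≤ 10 * γ^2 * M := by
      calc q^2 * (9/25) * M = ∑ y, (q * ((3/5) * m y))^2 := hLHS.symm
        _ ≤ ∑ y, 2 * ((u y)^2 + (v y)^2) := hsumE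
        _ ≤ 10 * γ^2 * M := hRHS
    have hexp2 : (q^2*(9/25) - 10*γ^2) * M = q^2*(9/25)*M - 10*γ^2*M := by ring
    have hfac : (q^2*(9/25) - 10*γ^2) * M ≤ 0 := by rw [hexp2]; linarith
    have hM_le : M ≤ 0 := by
      by_contra hMp
      push_neg at hMp
      have := mul_pos (by linarith : (0:ℝ) < q^2*(9/25) - 10*γ^2) hMp
      linarith
    linarith
  -- conclude θ = 0
  intro x
  have hterm : (m x)^2 = 0 := by
    have := Finset.sum_eq_zero_iff_of_nonneg (fun y (_ : y ∈ Finset.univ) => sq_nonneg (m y))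
    rw [← hM] at this
    exact (this.mp hMzero) x (Finset.mem_univ x)
  have hmx : m x = 0 := by
    have := sq_eq_zero_iff.mp hterm
    exact this
  have : |θ x| = 0 := by
    rcases min_cases |θ x| 1 with ⟨heq, _⟩ | ⟨heq, hle⟩
    · rw [hm] at hmx; simp only at hmx; rw [heq] at hmx; exact hmx
    · rw [hm] at hmx; simp only at hmx; rw [heq] at hmx; norm_num at hmx
  exact abs_eq_zero.mp this

lemma sin_shift (x : ℝ) (k : ℤ) : Real.sin (x - k * (2 * Real.pi)) = Real.sin x := by
  have h1 : Real.sin ((k:ℝ) * (2 * Real.pi)) = 0 := by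
    have := Real.sin_int_mul_two_pi_sub (0:ℝ) k
    simpa using this
  have h2 : Real.cos ((k:ℝ) * (2 * Real.pi)) = 1 := Real.cos_int_mul_two_pi k
  rw [Real.sin_sub, h1, h2]
  ring

lemma cos_shift (x : ℝ) (k : ℤ) : Real.cos (x - k * (2 * Real.pi)) = Real.cos x := by
  have h1 : Real.sin ((k:ℝ) * (2 * Real.pi)) = 0 := by
    have := Real.sin_int_mul_two_pi_sub (0:ℝ) k
    simpa using this
  have h2 : Real.cos ((k:ℝ) * (2 * Real.pi)) = 1 := Real.cos_int_mul_two_pi k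
  rw [Real.cos_sub, h1, h2]
  ring

theorem ramanujan_globally_synchronizing {n : ℕ} (A : Matrix (Fin n) (Fin n) ℝ)
    (hA : IsAdjMatrix A) (d : ℕ) (hd : 600 ≤ d)
    (hreg : ∀ x, ∑ y, A x y = (d : ℝ))
    (hexp : opNorm (A - ((d : ℝ) / n) • onesMat n) ≤ 2 * Real.sqrt ((d : ℝ) - 1))
    (θ : Fin n → ℝ) (hθ : IsStable A θ) : FullySync θ := by
  rcases Nat.eq_zero_or_pos n with hn0 | hn
  · subst hn0; intro x; exact x.elim0
  set D := (d:ℝ) with hD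
  have hD6 : (600:ℝ) ≤ D := by rw [hD]; exact_mod_cast hd
  have hN : (0:ℝ) < n := by exact_mod_cast hn
  set γ := opNorm (A - (D / n) • onesMat n) with hγ
  have hγ0 : 0 ≤ γ := norm_nonneg _
  have hγle : γ ≤ 2 * Real.sqrt (D - 1) := hexp
  set Sc := ∑ x, Real.cos (θ x) with hSc
  set Ss := ∑ x, Real.sin (θ x) with hSs
  set ρ0 := Real.sqrt (1/2 - 3 * Real.sqrt (D - 1) / D) with hρ0
  -- step A bound
  have hA1 := stepA hn A d hreg θ hθ.2
  rw [← hγ, ← hSc, ← hSs] at hA1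
  -- numeric facts
  have hsqD : Real.sqrt (D - 1) ≤ D / 24 := by
    have h1 : Real.sqrt (D - 1) ≤ Real.sqrt D := Real.sqrt_le_sqrt (by linarith)
    have h24 : (24:ℝ) ≤ Real.sqrt D := by
      nlinarith [Real.sq_sqrt (by linarith : (0:ℝ) ≤ D), Real.sqrt_nonneg D]
    have h2 : Real.sqrt D ≤ D / 24 := by
      rw [le_div_iff₀ (by norm_num : (0:ℝ) < 24)]
      nlinarith [Real.sq_sqrt (by linarith : (0:ℝ) ≤ D), h24]
    linarith
  have hρsq_pos : (0:ℝ) < 1/2 - 3 * Real.sqrt (D - 1) / D := by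
    have : 3 * Real.sqrt (D - 1) / D ≤ 3 / 24 := by
      rw [div_le_div_iff₀ (by linarith) (by norm_num)]
      nlinarith [hsqD]
    linarith
  have hρsq : ρ0^2 = 1/2 - 3 * Real.sqrt (D - 1) / D := by
    rw [hρ0, Real.sq_sqrt hρsq_pos.le]
  have hρ0nn : 0 ≤ ρ0 := Real.sqrt_nonneg _
  -- lower bound on Sc² + Ss²
  have hQ : (n:ℝ)^2 * ρ0^2 ≤ Sc^2 + Ss^2 := by
    have h1 : (n:ℝ)^2 * (D - 3*γ) ≤ 2 * D * (Sc^2 + Ss^2) := hA1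
    have h2 : D - 3*γ ≥ D - 6 * Real.sqrt (D - 1) := by linarith
    have h3 : (n:ℝ)^2 * (D - 6 * Real.sqrt (D-1)) ≤ 2 * D * (Sc^2 + Ss^2) := by
      nlinarith [sq_nonneg (n:ℝ)]
    have h4 : ρ0^2 * (2*D) = D - 6 * Real.sqrt (D-1) := by
      rw [hρsq]
      field_simp
      ring
    nlinarith [h3, h4, hN]
  set R := Real.sqrt (Sc^2 + Ss^2) with hR
  have hRge : (n:ℝ) * ρ0 ≤ R := by
    rw [hR]
    have : ((n:ℝ) * ρ0)^2 ≤ Sc^2 + Ss^2 := by nlinarith [hQ]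
    nlinarith [Real.sq_sqrt (by positivity : (0:ℝ) ≤ Sc^2 + Ss^2),
      Real.sqrt_nonneg (Sc^2 + Ss^2), this, mul_nonneg hN.le hρ0nn]
  have hρ0pos : 0 < ρ0 := Real.sqrt_pos.mpr hρsq_pos
  have hRpos : 0 < R := lt_of_lt_of_le (by positivity) hRge
  have hRsq : R^2 = Sc^2 + Ss^2 := Real.sq_sqrt (by positivity)
  -- rotation angle
  set z : ℂ := ⟨Sc, Ss⟩ with hz
  have hznorm : ‖z‖ = R := by
    rw [Complex.norm_def, Complex.normSq_mk, hR]
    congr 1; ring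
  have hzne : z ≠ 0 := by
    intro h
    rw [h] at hznorm
    simp at hznorm
    linarith [hznorm ▸ hRpos]
  set φ := Complex.arg z with hφ
  have hcosφ : Real.cos φ = Sc / R := by
    rw [hφ, Complex.cos_arg hzne, hznorm]
  have hsinφ : Real.sin φ = Ss / R := by
    rw [hφ, Complex.sin_arg, hznorm]
  -- reduced phases
  set r : Fin n → ℤ := fun x => round ((θ x - φ) / (2 * Real.pi)) with hr
  set θ'' : Fin n → ℝ := fun x => θ x - φ - (r x) * (2 * Real.pi) with hθ''
  have hdiff : ∀ x y, θ'' x - θ'' y = (θ x - θ y) - ((r x - r y : ℤ)) * (2 * Real.pi) := by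
    intro x y
    rw [hθ'']
    push_cast
    ring
  have hsin_eq : ∀ x y, Real.sin (θ'' x - θ'' y) = Real.sin (θ x - θ y) := by
    intro x y; rw [hdiff x y, sin_shift]
  have hcos_eq : ∀ x y, Real.cos (θ'' x - θ'' y) = Real.cos (θ x - θ y) := by
    intro x y; rw [hdiff x y, cos_shift]
  have hsin1 : ∀ x, Real.sin (θ'' x) = Real.sin (θ x - φ) := by
    intro x; rw [hθ'']; exact sin_shift _ _
  have hcos1 : ∀ x, Real.cos (θ'' x) = Real.cos (θ x - φ) := by
    intro x; rw [hθ'']; exact cos_shift _ _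
  -- range
  have hrange : ∀ x, |θ'' x| ≤ Real.pi := by
    intro x
    have h1 : |(θ x - φ) / (2 * Real.pi) - r x| ≤ 1/2 := by
      rw [hr]; exact abs_sub_round _
    have h2 : θ'' x = ((θ x - φ) / (2 * Real.pi) - r x) * (2 * Real.pi) := by
      rw [hθ'']; field_simp
    rw [h2, abs_mul]
    have h3 : |2 * Real.pi| = 2 * Real.pi := abs_of_pos (by positivity)
    rw [h3]
    nlinarith [Real.pi_pos, h1, abs_nonneg ((θ x - φ) / (2 * Real.pi) - r x)]
  -- sums
  have hSs'' : ∑ x, Real.sin (θ'' x) = 0 := by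
    rw [Finset.sum_congr rfl (fun x _ => hsin1 x)]
    have : ∀ x : Fin n, Real.sin (θ x - φ) = Real.sin (θ x) * (Sc/R) - Real.cos (θ x) * (Ss/R) := by
      intro x; rw [Real.sin_sub, hcosφ, hsinφ]
    rw [Finset.sum_congr rfl (fun x _ => this x), Finset.sum_sub_distrib,
      ← Finset.sum_mul, ← Finset.sum_mul, ← hSs, ← hSc]
    field_simp
    ring
  have hSc'' : ∑ x, Real.cos (θ'' x) = R := by
    rw [Finset.sum_congr rfl (fun x _ => hcos1 x)]
    have : ∀ x : Fin n, Real.cos (θ x - φ) = Real.cos (θ x) * (Sc/R) + Real.sin (θ x) * (Ss/R) := by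
      intro x; rw [Real.cos_sub, hcosφ, hsinφ]
    rw [Finset.sum_congr rfl (fun x _ => this x), Finset.sum_add_distrib,
      ← Finset.sum_mul, ← Finset.sum_mul, ← hSs, ← hSc]
    field_simp [hRpos.ne']
    nlinarith [hRsq]
  -- stability and equilibrium transfer
  have hequi'' : ∀ y, ∑ x, A x y * Real.sin (θ'' x - θ'' y) = 0 := by
    intro y
    rw [Finset.sum_congr rfl (fun x _ => by rw [hsin_eq x y])]
    exact hθ.1 y
  have hstab'' : ∀ f : Fin n → ℝ,
      0 ≤ ∑ x, ∑ y, A x y * Real.cos (θ'' x - θ'' y) * (f x - f y) ^ 2 := by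
    intro f
    have := hθ.2 f
    have heq : ∑ x, ∑ y, A x y * Real.cos (θ'' x - θ'' y) * (f x - f y) ^ 2
        = ∑ x, ∑ y, A x y * Real.cos (θ x - θ y) * (f x - f y) ^ 2 := by
      apply Finset.sum_congr rfl; intro x _
      apply Finset.sum_congr rfl; intro y _
      rw [hcos_eq x y]
    rw [heq]
    exact this
  -- apply master
  have hz0 := master hn A hA d hd hreg hexp θ'' hequi'' hstab'' hrange hSs''
    (by rw [hSc'']; exact le_trans (by rw [← hρ0]) hRge)
  -- conclude
  intro x y
  refine ⟨r x - r y, ?_⟩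
  have hx := hz0 x
  have hy := hz0 y
  rw [hθ''] at hx hy
  simp only at hx hy
  have : θ x - θ y = (r x - r y : ℤ) * (2 * Real.pi) := by
    push_cast
    linarith [hx, hy]
  rw [this]
  push_cast
  ring
end

section
/- Let θ be a stable state of the homogeneous Kuramoto model on an (n,d,α)-expander graph G, taking values in (−π, π], and suppose ρ₁(θ) is real and non-negative. Then nα² ≥ ρ₁(θ)² · Σ_{x∈V} s(θ_x). -/
open Finset

lemma aux_mulVec_sq_le {n : ℕ} (M : Matrix (Fin n) (Fin n) ℝ) (v : Fin n → ℝ)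
    (C : ℝ) (hC : ‖LinearMap.toContinuousLinearMap (Matrix.toEuclideanLin M)‖ ≤ C) :
    ∑ y, (M.mulVec v y) ^ 2 ≤ C ^ 2 * ∑ x, (v x) ^ 2 := by
  set v' : EuclideanSpace ℝ (Fin n) := (WithLp.equiv 2 (Fin n → ℝ)).symm v with hv'
  have h1 : ‖(Matrix.toEuclideanLin M) v'‖ ≤ C * ‖v'‖ := by
    have h := (LinearMap.toContinuousLinearMap (Matrix.toEuclideanLin M)).le_opNorm v'
    rw [LinearMap.coe_toContinuousLinearMap'] at h
    exact h.trans (mul_le_mul_of_nonneg_right hC (norm_nonneg _))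
  have h2 : ‖(Matrix.toEuclideanLin M) v'‖ ^ 2 ≤ C ^ 2 * ‖v'‖ ^ 2 := by
    calc ‖(Matrix.toEuclideanLin M) v'‖ ^ 2 ≤ (C * ‖v'‖) ^ 2 :=
          pow_le_pow_left₀ (norm_nonneg _) h1 2
      _ = C ^ 2 * ‖v'‖ ^ 2 := by ring
  have hnv : ‖v'‖ ^ 2 = ∑ x, (v x) ^ 2 := by
    rw [EuclideanSpace.norm_eq, Real.sq_sqrt (by positivity)]
    simp [hv', Real.norm_eq_abs, sq_abs]
  have hnw : ‖(Matrix.toEuclideanLin M) v'‖ ^ 2 = ∑ y, (M.mulVec v y) ^ 2 := by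
    rw [EuclideanSpace.norm_eq, Real.sq_sqrt (by positivity)]
    rw [Matrix.toEuclideanLin_apply]
    simp [hv', Real.norm_eq_abs, sq_abs]
  rw [hnw, hnv] at h2
  exact h2

lemma aux_pointwise (dρ cy sy qc qs t : ℝ) (hdρ : 0 ≤ dρ)
    (hcy : cy = Real.cos t) (hsy : sy = Real.sin t)
    (hcos : Real.pi / 2 < |t| → cy ≤ 0)
    (hE : cy * qs - sy * qc = dρ * sy)
    (hS : 0 ≤ cy * qc + sy * qs + dρ * cy) :
    dρ ^ 2 * sFun t ≤ qc ^ 2 + qs ^ 2 := by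
  have hpyth : cy ^ 2 + sy ^ 2 = 1 := by
    rw [hcy, hsy]; exact Real.cos_sq_add_sin_sq t
  have hrot : (cy * qc + sy * qs) ^ 2 + (cy * qs - sy * qc) ^ 2
      = (cy ^ 2 + sy ^ 2) * (qc ^ 2 + qs ^ 2) := by ring
  rw [hpyth, one_mul, hE] at hrot
  by_cases hcase : |t| ≤ Real.pi / 2
  · rw [sFun, if_pos hcase, ← hsy]
    nlinarith [sq_nonneg (cy * qc + sy * qs), hrot]
  · rw [sFun, if_neg hcase]
    have hc0 : cy ≤ 0 := hcos (not_le.mp hcase)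
    have h0 : 0 ≤ dρ * (-cy) := mul_nonneg hdρ (by linarith)
    have ha2 : (dρ * cy) ^ 2 ≤ (cy * qc + sy * qs) ^ 2 := by nlinarith [hS, h0]
    have hsq : (dρ * cy) ^ 2 + (dρ * sy) ^ 2 = dρ ^ 2 := by
      have h : (dρ * cy) ^ 2 + (dρ * sy) ^ 2 = dρ ^ 2 * (cy ^ 2 + sy ^ 2) := by ring
      rw [h, hpyth, mul_one]
    nlinarith [hrot, ha2, hsq]

lemma aux_indicator {n : ℕ} (t : Fin n → Fin n → ℝ) (y : Fin n) :
    ∑ x, ∑ z, t x z * ((if x = y then (1:ℝ) else 0) - (if z = y then (1:ℝ) else 0)) ^ 2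
      = ∑ z, t y z + ∑ x, t x y - 2 * t y y := by
  have e1 : ∀ x z : Fin n, t x z * ((if x = y then (1:ℝ) else 0) - (if z = y then (1:ℝ) else 0)) ^ 2
      = (if x = y then t x z else 0) + (if z = y then t x z else 0)
        - (if x = y then (if z = y then 2 * t x z else 0) else 0) := by
    intro x z; by_cases hx : x = y <;> by_cases hz : z = y <;> simp [hx, hz] <;> ring
  simp only [e1, Finset.sum_sub_distrib, Finset.sum_add_distrib,
    Finset.sum_ite_eq' Finset.univ y, Finset.mem_univ, if_true, Finset.sum_ite_irrel,
    Finset.sum_const_zero]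

theorem stable_state_s_bound {n : ℕ} (A : Matrix (Fin n) (Fin n) ℝ)
    (hA : IsAdjMatrix A) (d α : ℝ) (hd : 0 < d) (hα : 0 < α)
    (hexp : IsExpander A d α) (θ : Fin n → ℝ) (hθ : IsStable A θ)
    (hrange : ∀ x, θ x ∈ Set.Ioc (-Real.pi) Real.pi)
    (him : (daido 1 θ).im = 0) (hre : 0 ≤ (daido 1 θ).re) :
    (n : ℝ) * α ^ 2 ≥ (daido 1 θ).re ^ 2 * ∑ x, sFun (θ x) := by
  obtain ⟨hsymm, -, hdiag⟩ := hA
  obtain ⟨heq, hstab⟩ := hθ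
  rcases Nat.eq_zero_or_pos n with hn | hn
  · subst hn; simp
  have hnR : (0:ℝ) < (n:ℝ) := by exact_mod_cast hn
  have hnne : (n:ℝ) ≠ 0 := ne_of_gt hnR
  set ρ := (daido 1 θ).re with hρdef
  have harg : ∀ x : Fin n, Complex.I * ((1:ℕ):ℂ) * ((θ x : ℝ):ℂ) = ((θ x : ℝ):ℂ) * Complex.I := by
    intro x; push_cast; ring
  have hcastinv : ((n:ℂ))⁻¹ = (((n:ℝ)⁻¹ : ℝ) : ℂ) := by rw [Complex.ofReal_inv, Complex.ofReal_natCast]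
  have hred : ρ = (n:ℝ)⁻¹ * ∑ x, Real.cos (θ x) := by
    rw [hρdef]
    simp only [daido, hcastinv, Complex.re_ofReal_mul, Complex.re_sum]
    congr 1
    refine Finset.sum_congr rfl fun x _ => ?_
    rw [harg x, Complex.exp_ofReal_mul_I_re]
  have himd : (∑ x, Real.sin (θ x)) = 0 := by
    have h : (daido 1 θ).im = (n:ℝ)⁻¹ * ∑ x, Real.sin (θ x) := by
      simp only [daido, hcastinv, Complex.im_ofReal_mul, Complex.im_sum]
      congr 1
      refine Finset.sum_congr rfl fun x _ => ?_
      rw [harg x, Complex.exp_ofReal_mul_I_im]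
    rw [him] at h
    field_simp at h
    linarith [h]
  have hsumc : ∑ x, Real.cos (θ x) = (n:ℝ) * ρ := by rw [hred]; field_simp
  set B : Matrix (Fin n) (Fin n) ℝ := A - (d / n) • onesMat n with hB
  have hBapp : ∀ x y, B x y = A x y - d / n := by
    intro x y; simp [hB, onesMat, Matrix.sub_apply]
  have hBsym : ∀ x y, B x y = B y x := by
    intro x y; rw [hBapp, hBapp, hsymm.apply y x]
  -- transfer A-sums to B-sums
  have hAc : ∀ y, ∑ x, A x y * Real.cos (θ x)
      = (∑ x, B x y * Real.cos (θ x)) + d * ρ := by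
    intro y
    have h1 : ∑ x, A x y * Real.cos (θ x)
        = (∑ x, B x y * Real.cos (θ x)) + (d / n) * ∑ x, Real.cos (θ x) := by
      rw [Finset.mul_sum, ← Finset.sum_add_distrib]
      refine Finset.sum_congr rfl fun x _ => ?_
      rw [hBapp]; ring
    rw [h1, hsumc]; field_simp
  have hAs : ∀ y, ∑ x, A x y * Real.sin (θ x) = ∑ x, B x y * Real.sin (θ x) := by
    intro y
    have h1 : ∑ x, A x y * Real.sin (θ x)
        = (∑ x, B x y * Real.sin (θ x)) + (d / n) * ∑ x, Real.sin (θ x) := by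
      rw [Finset.mul_sum, ← Finset.sum_add_distrib]
      refine Finset.sum_congr rfl fun x _ => ?_
      rw [hBapp]; ring
    rw [h1, himd]; ring
  -- equilibrium condition per vertex
  have hE : ∀ y, Real.cos (θ y) * (∑ x, B x y * Real.sin (θ x))
      - Real.sin (θ y) * (∑ x, B x y * Real.cos (θ x)) = d * ρ * Real.sin (θ y) := by
    intro y
    have h0 := heq y
    have h1 : ∑ x, A x y * Real.sin (θ x - θ y)
        = Real.cos (θ y) * (∑ x, A x y * Real.sin (θ x))
          - Real.sin (θ y) * (∑ x, A x y * Real.cos (θ x)) := by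
      rw [Finset.mul_sum, Finset.mul_sum, ← Finset.sum_sub_distrib]
      refine Finset.sum_congr rfl fun x _ => ?_
      rw [Real.sin_sub]; ring
    rw [h1, hAs y, hAc y] at h0
    linear_combination h0
  -- stability: diagonal entries of the Hessian are nonnegative
  have key : ∀ y, 0 ≤ ∑ x, A x y * Real.cos (θ x - θ y) := by
    intro y
    have h := hstab (fun z => if z = y then (1:ℝ) else 0)
    have hid := aux_indicator (fun x z => A x z * Real.cos (θ x - θ z)) y
    rw [hid] at h
    have hsw : ∑ z, A y z * Real.cos (θ y - θ z) = ∑ x, A x y * Real.cos (θ x - θ y) := by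
      refine Finset.sum_congr rfl fun z _ => ?_
      rw [hsymm.apply z y, ← Real.cos_neg (θ y - θ z), neg_sub]
    rw [hsw, hdiag y] at h
    simp only [zero_mul, mul_zero, sub_zero] at h
    linarith [h]
  have hS : ∀ y, 0 ≤ Real.cos (θ y) * (∑ x, B x y * Real.cos (θ x))
      + Real.sin (θ y) * (∑ x, B x y * Real.sin (θ x)) + d * ρ * Real.cos (θ y) := by
    intro y
    have h0 := key y
    have h1 : ∑ x, A x y * Real.cos (θ x - θ y)
        = Real.cos (θ y) * (∑ x, A x y * Real.cos (θ x))
          + Real.sin (θ y) * (∑ x, A x y * Real.sin (θ x)) := by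
      rw [Finset.mul_sum, Finset.mul_sum, ← Finset.sum_add_distrib]
      refine Finset.sum_congr rfl fun x _ => ?_
      rw [Real.cos_sub]; ring
    rw [h1, hAs y, hAc y] at h0
    nlinarith [h0]
  have hdρ : 0 ≤ d * ρ := mul_nonneg hd.le hre
  -- pointwise bound
  have hpt : ∀ y, (d * ρ) ^ 2 * sFun (θ y)
      ≤ (∑ x, B x y * Real.cos (θ x)) ^ 2 + (∑ x, B x y * Real.sin (θ x)) ^ 2 := by
    intro y
    refine aux_pointwise (d * ρ) (Real.cos (θ y)) (Real.sin (θ y)) _ _ (θ y) hdρ rfl rfl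
      ?_ (hE y) (hS y)
    intro hgt
    rw [← Real.cos_abs]
    refine Real.cos_nonpos_of_pi_div_two_le_of_le hgt.le ?_
    have h1 := (hrange y).1
    have h2 := (hrange y).2
    have hpi : 0 < Real.pi := Real.pi_pos
    rw [abs_le']  -- maybe not; use abs cases
    constructor <;> linarith
  have hsum : ∑ y, (d * ρ) ^ 2 * sFun (θ y)
      ≤ ∑ y, ((∑ x, B x y * Real.cos (θ x)) ^ 2 + (∑ x, B x y * Real.sin (θ x)) ^ 2) :=
    Finset.sum_le_sum fun y _ => hpt y
  -- operator norm bound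
  have hexp' : ‖LinearMap.toContinuousLinearMap (Matrix.toEuclideanLin B)‖ ≤ α * d := by
    rw [hB]; exact hexp
  have hmv : ∀ (v : Fin n → ℝ) (y : Fin n), B.mulVec v y = ∑ x, B x y * v x := by
    intro v y
    rw [Matrix.mulVec, dotProduct]
    refine Finset.sum_congr rfl fun x _ => ?_
    rw [hBsym x y]
  have hbc : ∑ y, (∑ x, B x y * Real.cos (θ x)) ^ 2
      ≤ (α * d) ^ 2 * ∑ x, (Real.cos (θ x)) ^ 2 := by
    have h := aux_mulVec_sq_le B (fun x => Real.cos (θ x)) (α * d) hexp'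
    simpa only [hmv] using h
  have hbs : ∑ y, (∑ x, B x y * Real.sin (θ x)) ^ 2
      ≤ (α * d) ^ 2 * ∑ x, (Real.sin (θ x)) ^ 2 := by
    have h := aux_mulVec_sq_le B (fun x => Real.sin (θ x)) (α * d) hexp'
    simpa only [hmv] using h
  have hsumn : (∑ x, (Real.cos (θ x)) ^ 2) + (∑ x, (Real.sin (θ x)) ^ 2) = (n:ℝ) := by
    rw [← Finset.sum_add_distrib]
    simp [Real.cos_sq_add_sin_sq]
  have hfin : (d * ρ) ^ 2 * ∑ y, sFun (θ y) ≤ (α * d) ^ 2 * (n:ℝ) := by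
    rw [Finset.mul_sum]
    calc ∑ y, (d * ρ) ^ 2 * sFun (θ y)
        ≤ ∑ y, ((∑ x, B x y * Real.cos (θ x)) ^ 2 + (∑ x, B x y * Real.sin (θ x)) ^ 2) := hsum
      _ = (∑ y, (∑ x, B x y * Real.cos (θ x)) ^ 2)
          + ∑ y, (∑ x, B x y * Real.sin (θ x)) ^ 2 := Finset.sum_add_distrib
      _ ≤ (α * d) ^ 2 * (∑ x, (Real.cos (θ x)) ^ 2)
          + (α * d) ^ 2 * ∑ x, (Real.sin (θ x)) ^ 2 := add_le_add hbc hbs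
      _ = (α * d) ^ 2 * ((∑ x, (Real.cos (θ x)) ^ 2) + ∑ x, (Real.sin (θ x)) ^ 2) := by ring
      _ = (α * d) ^ 2 * (n:ℝ) := by rw [hsumn]
  have hd2 : (0:ℝ) < d ^ 2 := by positivity
  nlinarith [hfin, hd2]
end

section
/- Let θ be a stable state of the homogeneous Kuramoto model on an (n,d,α)-expander graph G, taking values in (−π, π], and suppose ρ₁(θ) is real and strictly positive. Then |ρ₂(θ)| ≥ 1 − 2α²/ρ₁(θ)². -/
open Finset

lemma mulVec_sq_le {n : ℕ} (M : Matrix (Fin n) (Fin n) ℝ) (C : ℝ)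
    (h : opNorm M ≤ C) (v : Fin n → ℝ) :
    ∑ y, (M.mulVec v y) ^ 2 ≤ C ^ 2 * ∑ x, (v x) ^ 2 := by
  set v' : EuclideanSpace ℝ (Fin n) := (WithLp.equiv 2 (Fin n → ℝ)).symm v with hv'
  have hnorm : ∀ w : Fin n → ℝ,
      ‖(WithLp.equiv 2 (Fin n → ℝ)).symm w‖ ^ 2 = ∑ i, w i ^ 2 := by
    intro w
    rw [EuclideanSpace.norm_eq, Real.sq_sqrt (by positivity)]
    simp [sq_abs]
  have hle : ‖Matrix.toEuclideanLin M v'‖ ≤ C * ‖v'‖ := by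
    calc ‖Matrix.toEuclideanLin M v'‖
        = ‖(LinearMap.toContinuousLinearMap (Matrix.toEuclideanLin M)) v'‖ := by simp
      _ ≤ opNorm M * ‖v'‖ :=
          (LinearMap.toContinuousLinearMap (Matrix.toEuclideanLin M)).le_opNorm v'
      _ ≤ C * ‖v'‖ := by gcongr
  have hsq : ‖Matrix.toEuclideanLin M v'‖ ^ 2 ≤ C ^ 2 * ‖v'‖ ^ 2 := by
    nlinarith [norm_nonneg v', norm_nonneg (Matrix.toEuclideanLin M v')]
  rw [show Matrix.toEuclideanLin M v'
      = (WithLp.equiv 2 (Fin n → ℝ)).symm (M.mulVec v) from rfl, hnorm, hv', hnorm] at hsq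
  exact hsq

lemma daido_re_im {n : ℕ} (k : ℕ) (θ : Fin n → ℝ) :
    (daido k θ).re = (n : ℝ)⁻¹ * ∑ x, Real.cos (k * θ x) ∧
    (daido k θ).im = (n : ℝ)⁻¹ * ∑ x, Real.sin (k * θ x) := by
  unfold daido
  have h1 : ∀ x : Fin n, Complex.I * (k : ℂ) * (θ x : ℂ)
      = ((k * θ x : ℝ) : ℂ) * Complex.I := by intro x; push_cast; ring
  simp_rw [h1]
  have h2 : ((n : ℂ))⁻¹ = (((n : ℝ)⁻¹ : ℝ) : ℂ) := by push_cast; ring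
  rw [h2]
  constructor
  · rw [Complex.re_ofReal_mul, Complex.re_sum]
    simp_rw [Complex.exp_ofReal_mul_I_re]
  · rw [Complex.im_ofReal_mul, Complex.im_sum]
    simp_rw [Complex.exp_ofReal_mul_I_im]

theorem rho_two_lower_bound {n : ℕ} (A : Matrix (Fin n) (Fin n) ℝ)
    (hA : IsAdjMatrix A) (d α : ℝ) (hd : 0 < d) (hα : 0 < α)
    (hexp : IsExpander A d α) (θ : Fin n → ℝ) (hθ : IsStable A θ)
    (hrange : ∀ x, θ x ∈ Set.Ioc (-Real.pi) Real.pi)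
    (him : (daido 1 θ).im = 0) (hre : 0 < (daido 1 θ).re) :
    ‖daido 2 θ‖ ≥ 1 - 2 * α ^ 2 / (daido 1 θ).re ^ 2 := by
  obtain ⟨heq, -⟩ := hθ
  rcases Nat.eq_zero_or_pos n with hn | hn
  · subst hn; simp [daido] at hre
  have hn0 : ((n : ℝ)) ≠ 0 := by positivity
  set ρ := (daido 1 θ).re with hρdef
  set s : Fin n → ℝ := fun x => Real.sin (θ x) with hs
  set c : Fin n → ℝ := fun x => Real.cos (θ x) with hc
  have hsum_s : ∑ x, s x = 0 := by
    have h := (daido_re_im 1 θ).2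
    rw [him] at h
    field_simp at h
    simpa [hs] using h.symm
  have hsum_c : ∑ x, c x = n * ρ := by
    have h := (daido_re_im 1 θ).1
    rw [← hρdef] at h
    have : (n : ℝ) * ρ = ∑ x, Real.cos ((1 : ℕ) * θ x) := by
      rw [h]; field_simp
    simpa using this.symm
  have hρpos : 0 < ρ := hre
  set B := A - (d / (n : ℝ)) • onesMat n with hB
  have hopB : opNorm B ≤ α * d := hexp
  have hsymm : ∀ x y, A x y = A y x := fun x y => (congrFun (congrFun hA.1 x) y).symm
  have hBs : ∀ y, B.mulVec s y = ∑ x, A x y * s x := by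
    intro y
    simp only [hB, Matrix.mulVec, dotProduct, Matrix.sub_apply, Matrix.smul_apply,
      onesMat, Matrix.of_apply, smul_eq_mul, mul_one, sub_mul]
    rw [Finset.sum_sub_distrib, ← Finset.mul_sum, hsum_s, mul_zero, sub_zero]
    exact Finset.sum_congr rfl fun x _ => by rw [hsymm x y]
  have hBc : ∀ y, B.mulVec c y = (∑ x, A x y * c x) - d * ρ := by
    intro y
    simp only [hB, Matrix.mulVec, dotProduct, Matrix.sub_apply, Matrix.smul_apply,
      onesMat, Matrix.of_apply, smul_eq_mul, mul_one, sub_mul]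
    rw [Finset.sum_sub_distrib, ← Finset.mul_sum, hsum_c]
    have : d / (n : ℝ) * ((n : ℝ) * ρ) = d * ρ := by field_simp
    rw [this]
    congr 1
    exact Finset.sum_congr rfl fun x _ => by rw [hsymm x y]
  have key : ∀ y, d * ρ * s y = c y * B.mulVec s y - s y * B.mulVec c y := by
    intro y
    have h := heq y
    simp_rw [Real.sin_sub] at h
    rw [hBs, hBc]
    have h2 : (∑ x, A x y * s x) * c y - (∑ x, A x y * c x) * s y = 0 := by
      rw [Finset.sum_mul, Finset.sum_mul, ← Finset.sum_sub_distrib, ← h]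
      exact Finset.sum_congr rfl fun x _ => by simp only [hs, hc]; ring
    linear_combination (-1 : ℝ) * h2
  have hpt : ∀ y, (d * ρ * s y) ^ 2 ≤ (B.mulVec s y) ^ 2 + (B.mulVec c y) ^ 2 := by
    intro y
    rw [key y]
    have h1 : s y ^ 2 + c y ^ 2 = 1 := Real.sin_sq_add_cos_sq (θ y)
    nlinarith [sq_nonneg (s y * B.mulVec s y + c y * B.mulVec c y)]
  have hsc : (∑ x, s x ^ 2) + (∑ x, c x ^ 2) = n := by
    rw [← Finset.sum_add_distrib]
    simp [hs, hc, Real.sin_sq_add_cos_sq]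
  have hkey : d ^ 2 * ρ ^ 2 * ∑ y, s y ^ 2 ≤ α ^ 2 * d ^ 2 * n := by
    calc d ^ 2 * ρ ^ 2 * ∑ y, s y ^ 2 = ∑ y, (d * ρ * s y) ^ 2 := by
          rw [Finset.mul_sum]; exact Finset.sum_congr rfl fun y _ => by ring
      _ ≤ ∑ y, ((B.mulVec s y) ^ 2 + (B.mulVec c y) ^ 2) :=
          Finset.sum_le_sum fun y _ => hpt y
      _ = (∑ y, (B.mulVec s y) ^ 2) + ∑ y, (B.mulVec c y) ^ 2 := Finset.sum_add_distrib
      _ ≤ (α * d) ^ 2 * (∑ x, s x ^ 2) + (α * d) ^ 2 * (∑ x, c x ^ 2) :=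
          add_le_add (mulVec_sq_le B (α * d) hopB s) (mulVec_sq_le B (α * d) hopB c)
      _ = α ^ 2 * d ^ 2 * n := by rw [← mul_add, hsc]; ring
  have hsin : ρ ^ 2 * ∑ y, s y ^ 2 ≤ α ^ 2 * n := by
    have hd2 : (0 : ℝ) < d ^ 2 := by positivity
    nlinarith [hkey]
  have h2re : (daido 2 θ).re = (n : ℝ)⁻¹ * ((n : ℝ) - 2 * ∑ x, s x ^ 2) := by
    rw [(daido_re_im 2 θ).1]
    congr 1
    have : ∀ x : Fin n, Real.cos ((2 : ℕ) * θ x) = 1 - 2 * s x ^ 2 := by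
      intro x
      have h1 := Real.sin_sq_add_cos_sq (θ x)
      have h2 : Real.cos (2 * θ x) = 2 * Real.cos (θ x) ^ 2 - 1 := Real.cos_two_mul (θ x)
      push_cast
      rw [h2]; simp only [hs]; linarith
    rw [Finset.sum_congr rfl fun x _ => this x, Finset.sum_sub_distrib, ← Finset.mul_sum]
    simp
  have hfinal : 1 - 2 * α ^ 2 / ρ ^ 2 ≤ (daido 2 θ).re := by
    rw [h2re]
    have hnpos : (0 : ℝ) < (n : ℝ) := by positivity
    have hρ2 : (0 : ℝ) < ρ ^ 2 := by positivity
    have hS : 2 * (∑ x, s x ^ 2) / (n : ℝ) ≤ 2 * α ^ 2 / ρ ^ 2 := by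
      rw [div_le_div_iff₀ hnpos hρ2]
      nlinarith [hsin]
    have heq2 : (n : ℝ)⁻¹ * ((n : ℝ) - 2 * ∑ x, s x ^ 2)
        = 1 - 2 * (∑ x, s x ^ 2) / (n : ℝ) := by field_simp
    rw [heq2]
    linarith
  calc (1 : ℝ) - 2 * α ^ 2 / ρ ^ 2 ≤ (daido 2 θ).re := hfinal
    _ ≤ ‖daido 2 θ‖ := Complex.re_le_norm _
end

section
/- Kernel stability condition: let θ be a stable state of the homogeneous Kuramoto model on a graph G, taking values in (−π, π], with ρ₁(θ) real and non-negative. Then for every y ∈ V, Σ_{x∈V} A_{x,y} K(θ_x, θ_y) ≥ 0. -/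
open Finset

theorem kernel_stability {n : ℕ} (A : Matrix (Fin n) (Fin n) ℝ)
    (hA : IsAdjMatrix A) (θ : Fin n → ℝ) (hθ : IsStable A θ)
    (hrange : ∀ x, θ x ∈ Set.Ioc (-Real.pi) Real.pi)
    (him : (daido 1 θ).im = 0) (hre : 0 ≤ (daido 1 θ).re) :
    ∀ y, 0 ≤ ∑ x, A x y * kerK (θ x) (θ y) := by
  obtain ⟨hsymm, h01, hdiag⟩ := hA
  intro y
  have hAnn : ∀ x z, 0 ≤ A x z := fun x z => by rcases h01 x z with h | h <;> simp [h]
  set c := Real.cos (θ y) with hc_def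
  set s := Real.sin (θ y) with hs_def
  set C := ∑ x, A x y * Real.cos (θ x) with hC_def
  set S := ∑ x, A x y * Real.sin (θ x) with hS_def
  set P := ∑ x, A x y * |Real.sin (θ x)| with hP_def
  -- equilibrium at y
  have heq : c * S - s * C = 0 := by
    have h0 := hθ.1 y
    have : ∑ x, A x y * Real.sin (θ x - θ y) = c * S - s * C := by
      rw [hS_def, hC_def, Finset.mul_sum, Finset.mul_sum, ← Finset.sum_sub_distrib]
      exact Finset.sum_congr rfl fun x _ => by rw [Real.sin_sub]; ring
    linarith [this, h0]
  -- stability with indicator test function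
  have key : 0 ≤ c * C + s * S := by
    have hst := hθ.2 (fun x => if x = y then (1:ℝ) else 0)
    have e1 : ∀ x z : Fin n, A x z * Real.cos (θ x - θ z) *
        ((if x = y then (1:ℝ) else 0) - (if z = y then 1 else 0)) ^ 2
        = (if x = y then A x z * Real.cos (θ x - θ z) else 0)
          + (if z = y then A x z * Real.cos (θ x - θ z) else 0)
          - 2 * (if x = y then (if z = y then A x z * Real.cos (θ x - θ z) else 0) else 0) := by
      intro x z
      by_cases h1 : x = y <;> by_cases h2 : z = y <;> simp [h1, h2] <;> ring
    simp only [e1, Finset.sum_sub_distrib, Finset.sum_add_distrib, mul_ite, mul_zero,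
      Finset.sum_ite_irrel, Finset.sum_ite_eq', Finset.mem_univ, if_true,
      Finset.sum_const_zero, hdiag y, zero_mul, sub_zero] at hst
    have hsymcos : ∑ z, A y z * Real.cos (θ y - θ z) = ∑ x, A x y * Real.cos (θ x - θ y) := by
      refine Finset.sum_congr rfl fun x _ => ?_
      rw [← hsymm.apply, Real.cos_sub, Real.cos_sub]
      ring
    have expand : ∑ x, A x y * Real.cos (θ x - θ y) = c * C + s * S := by
      rw [hC_def, hS_def, Finset.mul_sum, Finset.mul_sum, ← Finset.sum_add_distrib]
      exact Finset.sum_congr rfl fun x _ => by rw [Real.cos_sub]; ring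
    rw [hsymcos, expand] at hst
    linarith
  -- sin |t| = |sin t| on the range
  have sinabs : ∀ x : Fin n, Real.sin |θ x| = |Real.sin (θ x)| := by
    intro x
    obtain ⟨h1, h2⟩ := hrange x
    rcases le_or_gt 0 (θ x) with h | h
    · rw [abs_of_nonneg h, abs_of_nonneg (Real.sin_nonneg_of_nonneg_of_le_pi h h2)]
    · rw [abs_of_neg h, Real.sin_neg,
        abs_of_nonpos (Real.sin_nonpos_of_nonpos_of_neg_pi_le h.le h1.le)]
  set m := min |θ y| (Real.pi / 2) with hm_def
  have hgoal : ∑ x, A x y * kerK (θ x) (θ y) = Real.cos m * P - Real.sin m * C := by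
    rw [hP_def, hC_def, Finset.mul_sum, Finset.mul_sum, ← Finset.sum_sub_distrib]
    refine Finset.sum_congr rfl fun x _ => ?_
    rw [kerK, ← hm_def, Real.sin_sub, sinabs x, Real.cos_abs]
    ring
  rw [hgoal]
  have hPS : S ≤ P := Finset.sum_le_sum fun x _ =>
    mul_le_mul_of_nonneg_left (le_abs_self _) (hAnn x y)
  have hPS' : -P ≤ S := by
    have h := Finset.sum_le_sum (fun x (_ : x ∈ Finset.univ) =>
      mul_le_mul_of_nonneg_left (neg_abs_le (Real.sin (θ x))) (hAnn x y))
    simp only [mul_neg, Finset.sum_neg_distrib] at h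
    linarith [h]
  rcases le_or_gt |θ y| (Real.pi / 2) with hm | hm
  · have hmeq : m = |θ y| := min_eq_left hm
    have hcm : Real.cos m = c := by rw [hmeq, Real.cos_abs]
    have hsm : Real.sin m = |s| := by rw [hmeq, sinabs y]
    have hcnn : 0 ≤ c := by
      rw [hc_def]
      apply Real.cos_nonneg_of_mem_Icc
      constructor
      · linarith [abs_le.mp hm |>.1]
      · linarith [abs_le.mp hm |>.2]
    rw [hcm, hsm]
    rcases le_or_gt 0 s with hs | hs
    · rw [abs_of_nonneg hs]
      nlinarith [mul_nonneg hcnn (sub_nonneg.2 hPS)]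
    · rw [abs_of_neg hs]
      nlinarith [mul_nonneg hcnn (sub_nonneg.2 hPS')]
  · have hmeq : m = Real.pi / 2 := min_eq_right hm.le
    have hcm : Real.cos m = 0 := by rw [hmeq, Real.cos_pi_div_two]
    have hsm : Real.sin m = 1 := by rw [hmeq, Real.sin_pi_div_two]
    have hcneg : c < 0 := by
      rw [hc_def, ← Real.cos_abs]
      apply Real.cos_neg_of_pi_div_two_lt_of_lt hm
      have h2 : |θ y| ≤ Real.pi := abs_le.mpr ⟨by linarith [(hrange y).1], (hrange y).2⟩
      linarith [Real.pi_pos]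
    rw [hcm, hsm]
    have heq2 : s * (c * S - s * C) = 0 := by rw [heq]; ring
    nlinarith [mul_nonneg (neg_nonneg.2 hcneg.le) key, Real.sin_sq_add_cos_sq (θ y), heq2]
end

section
/- Half-circle lemma: let θ be a stable state of the homogeneous Kuramoto model on a connected graph G, taking values in (−π, π], with ρ₁(θ) real and non-negative. If |θ_x| < π/2 for every x ∈ V, then θ_x = 0 for every x ∈ V. -/
open Finset

theorem half_circle_lemma {n : ℕ} (A : Matrix (Fin n) (Fin n) ℝ)
    (hA : IsAdjMatrix A) (hconn : (matGraph A).Connected)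
    (θ : Fin n → ℝ) (hθ : IsStable A θ)
    (hrange : ∀ x, θ x ∈ Set.Ioc (-Real.pi) Real.pi)
    (him : (daido 1 θ).im = 0) (hre : 0 ≤ (daido 1 θ).re)
    (hhalf : ∀ x, |θ x| < Real.pi / 2) :
    ∀ x, θ x = 0 := by
  have hne : Nonempty (Fin n) := hconn.nonempty
  have hnpos : 0 < n := Fin.pos_iff_nonempty.mpr hne
  obtain ⟨y₀, -, hy₀⟩ := Finset.exists_max_image Finset.univ θ ⟨hne.some, Finset.mem_univ _⟩
  set M := θ y₀ with hM
  have hpi := Real.pi_pos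
  have key : ∀ y, θ y = M → ∀ x, (matGraph A).Adj y x → θ x = M := by
    intro y hy x hadj
    have heq := hθ.1 y
    have hterms : ∀ z ∈ Finset.univ, A z y * Real.sin (θ z - θ y) ≤ 0 := by
      intro z _
      rcases hA.2.1 z y with h0 | h1
      · rw [h0]; simp
      · rw [h1, one_mul]
        have hz := abs_lt.mp (hhalf z)
        have hyb := abs_lt.mp (hhalf y)
        apply Real.sin_nonpos_of_nonpos_of_neg_pi_le
        · have := hy₀ z (Finset.mem_univ z); rw [← hy] at this; linarith
        · linarith
    have hzero := (Finset.sum_eq_zero_iff_of_nonpos hterms).mp heq x (Finset.mem_univ x)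
    have hAxy : A x y = 1 := hadj.2.2
    rw [hAxy, one_mul] at hzero
    have hx := abs_lt.mp (hhalf x)
    have hyb := abs_lt.mp (hhalf y)
    have := (Real.sin_eq_zero_iff_of_lt_of_lt (by linarith) (by linarith)).mp hzero
    linarith [hy ▸ this]
  have hwalk : ∀ u v, (matGraph A).Walk u v → θ u = M → θ v = M := by
    intro u v w
    induction w with
    | nil => exact id
    | cons h p ih => exact fun hu => ih (key _ hu _ h)
  have hall : ∀ x, θ x = M := by
    intro x
    obtain ⟨w⟩ := hconn y₀ x
    exact hwalk y₀ x w rfl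
  have hMeq : (daido 1 θ).im = Real.sin M := by
    unfold daido
    have hcongr : ∀ x ∈ Finset.univ, Complex.exp (Complex.I * (1:ℕ) * θ x)
        = Complex.exp ((M : ℂ) * Complex.I) := by
      intro x _; rw [hall x]; congr 1; push_cast; ring
    rw [Finset.sum_congr rfl hcongr, Finset.sum_const, Finset.card_univ, Fintype.card_fin,
      nsmul_eq_mul, ← mul_assoc, inv_mul_cancel₀ (Nat.cast_ne_zero.mpr hnpos.ne'), one_mul,
      Complex.exp_ofReal_mul_I_im]
  have hsinM : Real.sin M = 0 := by rw [← hMeq]; exact him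
  have hMb := abs_lt.mp (hhalf y₀)
  have hM0 : M = 0 :=
    (Real.sin_eq_zero_iff_of_lt_of_lt (by linarith) (by linarith)).mp hsinM
  intro x; rw [hall x, hM0]
end

section
/- If G is an (n,d,α,c⁻,c⁺)-expander graph, then for every subset X ⊆ V with density ρ = |X|/n, (1 + c⁻(1 − ρ) − α) d |X| ≤ e(X, V) ≤ (1 + c⁺(1 − ρ) + α) d |X|. -/
open Finset

open scoped Matrix RealInnerProductSpace

lemma quad_abs_le {n : ℕ} (M : Matrix (Fin n) (Fin n) ℝ) (f : Fin n → ℝ) :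
    |f ⬝ᵥ (M *ᵥ f)| ≤ opNorm M * (f ⬝ᵥ f) := by
  set v : EuclideanSpace ℝ (Fin n) := (WithLp.equiv 2 _).symm f with hv
  have h1 : f ⬝ᵥ (M *ᵥ f) = ⟪v, (Matrix.toEuclideanLin M) v⟫ := by
    rw [dotProduct_comm]; rfl
  have h2 : f ⬝ᵥ f = ‖v‖ ^ 2 := by
    rw [← real_inner_self_eq_norm_sq]; rfl
  rw [h1, h2]
  calc |⟪v, (Matrix.toEuclideanLin M) v⟫| ≤ ‖v‖ * ‖(Matrix.toEuclideanLin M) v‖ :=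
        abs_real_inner_le_norm _ _
    _ ≤ ‖v‖ * (opNorm M * ‖v‖) := by
        gcongr
        exact (LinearMap.toContinuousLinearMap (Matrix.toEuclideanLin M)).le_opNorm v
    _ = opNorm M * ‖v‖ ^ 2 := by ring

theorem expander_degree_sum {n : ℕ} (A : Matrix (Fin n) (Fin n) ℝ)
    (hA : IsAdjMatrix A) (d α cm cp : ℝ) (hd : 0 < d) (hα : 0 < α)
    (hexp : IsExpander5 A d α cm cp) (X : Finset (Fin n)) :
    (1 + cm * (1 - (X.card : ℝ) / n) - α) * d * X.card ≤ eXY A X Finset.univ ∧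
      eXY A X Finset.univ ≤ (1 + cp * (1 - (X.card : ℝ) / n) + α) * d * X.card := by
  obtain ⟨hsymm, h01, hdiag⟩ := hA
  obtain ⟨hop, hpsd1, hpsd2⟩ := hexp
  rcases Nat.eq_zero_or_pos n with h0 | hn
  · subst h0
    have hX : X = ∅ := Subsingleton.elim _ _
    simp [eXY, hX]
  have hn' : (n : ℝ) ≠ 0 := Nat.cast_ne_zero.mpr hn.ne'
  set s : ℝ := (X.card : ℝ) with hs
  set g : Fin n → ℝ := fun x => if x ∈ X then 1 else 0 with hg
  set f : Fin n → ℝ := fun x => g x - s / n with hf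
  set deg : Fin n → ℝ := fun x => ∑ y, A x y with hdeg
  set Δ : Matrix (Fin n) (Fin n) ℝ := lapCentered A d with hΔdef
  -- helper: sums against the indicator
  have hind : ∀ h : Fin n → ℝ, (∑ x, g x * h x) = ∑ x ∈ X, h x := by
    intro h
    rw [hg]
    simp only [ite_mul, one_mul, zero_mul]
    rw [Finset.sum_ite_mem, Finset.univ_inter]
  have hgsum : (∑ x, g x) = s := by
    have := hind (fun _ => 1)
    simpa using this
  -- entrywise formula for Δ
  have hΔ : ∀ x y, Δ x y = (if x = y then deg x else 0) - A x y
      - (if x = y then d else 0) + d / n := by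
    intro x y
    simp [hΔdef, lapCentered, onesMat, Matrix.one_apply, Matrix.diagonal_apply, hdeg,
      mul_ite, mul_one, mul_zero]
  have hAsym : ∀ x y, A x y = A y x := fun x y => (hsymm.apply x y).symm
  have hrow : ∀ x, (∑ y, Δ x y) = 0 := by
    intro x
    simp only [hΔ, Finset.sum_add_distrib, Finset.sum_sub_distrib, Finset.sum_ite_eq,
      Finset.mem_univ, if_pos, Finset.sum_const, Finset.card_univ, Fintype.card_fin,
      nsmul_eq_mul]
    rw [hdeg]
    field_simp
    ring
  have hcol : ∀ y, (∑ x, Δ x y) = 0 := by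
    intro y
    have h1 : (∑ x, A x y) = deg y := by
      rw [hdeg]; exact Finset.sum_congr rfl fun x _ => hAsym x y
    simp only [hΔ, Finset.sum_add_distrib, Finset.sum_sub_distrib, Finset.sum_ite_eq',
      Finset.mem_univ, if_pos, Finset.sum_const, Finset.card_univ, Fintype.card_fin,
      nsmul_eq_mul, h1]
    field_simp
    ring
  -- the quadratic form of Δ at g
  set eV : ℝ := eXY A X Finset.univ with heV
  set eX : ℝ := eXY A X X with heX
  have e2 : g ⬝ᵥ (A *ᵥ g) = eX := by
    rw [heX, eXY]
    simp only [dotProduct, Matrix.mulVec, dotProduct]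
    rw [hind]
    refine Finset.sum_congr rfl fun x _ => ?_
    rw [← hind fun y => A x y]
    exact Finset.sum_congr rfl fun y _ => mul_comm _ _
  have e1 : g ⬝ᵥ (Matrix.diagonal deg *ᵥ g) = eV := by
    rw [heV, eXY]
    simp only [dotProduct, Matrix.mulVec_diagonal]
    rw [hind fun x => deg x * g x]
    refine Finset.sum_congr rfl fun x hx => ?_
    rw [hg]
    simp [hx, hdeg]
  have e3 : g ⬝ᵥ g = s := by
    rw [← hgsum, dotProduct]
    refine Finset.sum_congr rfl fun x _ => ?_
    rw [hg]; by_cases hx : x ∈ X <;> simp [hx]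
  have e4 : g ⬝ᵥ (onesMat n *ᵥ g) = s ^ 2 := by
    have : onesMat n *ᵥ g = fun _ => s := by
      funext x; simp [onesMat, Matrix.mulVec, dotProduct, hgsum]
    rw [this, dotProduct]
    rw [← Finset.sum_mul, hgsum]
    ring
  have hQg : g ⬝ᵥ (Δ *ᵥ g) = eV - eX - d * s + d / n * s ^ 2 := by
    rw [hΔdef, lapCentered, Matrix.add_mulVec, Matrix.sub_mulVec, Matrix.sub_mulVec,
      Matrix.smul_mulVec, Matrix.smul_mulVec, Matrix.one_mulVec]
    rw [dotProduct_add, dotProduct_sub, dotProduct_sub, dotProduct_smul, dotProduct_smul]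
    rw [e1, e2, e3, e4]
    simp [smul_eq_mul]
  -- the quadratic form at f equals that at g
  have hmv : Δ *ᵥ f = Δ *ᵥ g := by
    funext x
    simp only [Matrix.mulVec, dotProduct, hf, mul_sub, Finset.sum_sub_distrib, ← Finset.sum_mul,
      hrow x, zero_mul, sub_zero]
  have hdotsum : (∑ x, (Δ *ᵥ g) x) = 0 := by
    simp only [Matrix.mulVec, dotProduct]
    rw [Finset.sum_comm]
    refine Finset.sum_eq_zero fun y _ => ?_
    rw [← Finset.sum_mul, hcol y, zero_mul]
  have hQf : f ⬝ᵥ (Δ *ᵥ f) = eV - eX - d * s + d / n * s ^ 2 := by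
    rw [hmv, ← hQg]
    simp only [dotProduct, hf, sub_mul, Finset.sum_sub_distrib, ← Finset.mul_sum, hdotsum,
      mul_zero, sub_zero]
  -- norm of f
  have hff : f ⬝ᵥ f = s * (1 - s / n) := by
    have hx : ∀ x, f x * f x = g x - 2 * (s / n) * g x + (s / n) ^ 2 := by
      intro x
      rw [hf, hg]
      by_cases hx : x ∈ X <;> simp [hx] <;> ring
    simp only [dotProduct, hx, Finset.sum_add_distrib, Finset.sum_sub_distrib, ← Finset.mul_sum,
      hgsum, Finset.sum_const, Finset.card_univ, Fintype.card_fin, nsmul_eq_mul]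
    field_simp
    ring
  -- PSD bounds
  have hpos1 : cm * d * (s * (1 - s / n)) ≤ eV - eX - d * s + d / n * s ^ 2 := by
    have h := hpsd1.dotProduct_mulVec_nonneg f
    rw [star_trivial, Matrix.sub_mulVec, Matrix.smul_mulVec, Matrix.one_mulVec,
      dotProduct_sub, dotProduct_smul, smul_eq_mul, hQf, hff] at h
    linarith
  have hpos2 : eV - eX - d * s + d / n * s ^ 2 ≤ cp * d * (s * (1 - s / n)) := by
    have h := hpsd2.dotProduct_mulVec_nonneg f
    rw [star_trivial, Matrix.sub_mulVec, Matrix.smul_mulVec, Matrix.one_mulVec,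
      dotProduct_sub, dotProduct_smul, smul_eq_mul, hQf, hff] at h
    linarith
  -- expander bound
  have hexpq : |eX - d / n * s ^ 2| ≤ α * d * s := by
    have h := quad_abs_le (A - (d / n) • onesMat n) g
    rw [Matrix.sub_mulVec, Matrix.smul_mulVec, dotProduct_sub, dotProduct_smul,
      smul_eq_mul, e2, e4, e3] at h
    have hs0 : (0 : ℝ) ≤ s := by rw [hs]; positivity
    calc |eX - d / n * s ^ 2| ≤ opNorm (A - (d / n) • onesMat n) * s := h
      _ ≤ α * d * s := by
          have := hop
          rw [IsExpander] at this
          nlinarith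
  obtain ⟨hl, hr⟩ := abs_le.mp hexpq
  constructor
  · have key : (1 + cm * (1 - s / n) - α) * d * s
        = cm * d * (s * (1 - s / n)) + d * s - α * d * s := by ring
    linarith
  · have key : (1 + cp * (1 - s / n) + α) * d * s
        = cp * d * (s * (1 - s / n)) + d * s + α * d * s := by ring
    linarith
end

section
/- Let θ : V → (−π, π] be a state on a graph with n vertices, let M ≥ 0 be an integer, let π/2 = β₀ > β₁ > ⋯ > β_M ≥ 0 be angles, and let 0 ≤ c₀ ≤ c₁ ≤ ⋯ ≤ c_M be real numbers (with the convention c₋₁ = 0) such that |C_{β_k}(θ)| ≥ c_k for every 0 ≤ k ≤ M. Then Σ_{x∈V} s(θ_x) ≥ Σ_{k=0}^{M} (c_k − c_{k−1}) sin²(β_k) ≥ c_M sin²(β_M). -/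
open Finset

lemma abel_aux (a b : ℕ → ℝ) (m : ℕ) :
    ∑ k ∈ Finset.range (m + 1), (a k - if k = 0 then 0 else a (k - 1)) * b k
      = ∑ k ∈ Finset.range m, a k * (b k - b (k + 1)) + a m * b m := by
  induction m with
  | zero => simp
  | succ m ih =>
    rw [Finset.sum_range_succ, ih, Finset.sum_range_succ]
    simp only [Nat.succ_ne_zero, if_false, Nat.add_sub_cancel]
    ring

lemma sFun_nonneg (t : ℝ) : 0 ≤ sFun t := by
  unfold sFun; split <;> [positivity; norm_num]

lemma sFun_ge (ψ t : ℝ) (h0 : 0 ≤ ψ) (h1 : ψ ≤ Real.pi / 2) (h2 : ψ ≤ |t|) :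
    Real.sin ψ ^ 2 ≤ sFun t := by
  unfold sFun
  split
  · rename_i ht
    have h3 : Real.sin t ^ 2 = Real.sin |t| ^ 2 := by
      rcases abs_cases t with ⟨h, _⟩ | ⟨h, _⟩ <;> rw [h] <;> simp [Real.sin_neg]
    rw [h3]
    have hsψ : 0 ≤ Real.sin ψ := Real.sin_nonneg_of_nonneg_of_le_pi h0 (by linarith [Real.pi_pos])
    have : Real.sin ψ ≤ Real.sin |t| := by
      apply Real.strictMonoOn_sin.monotoneOn ⟨by linarith, h1⟩ ⟨by linarith [abs_nonneg t, Real.pi_pos], ht⟩ h2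
    nlinarith
  · have := Real.sin_le_one ψ
    have hsψ : 0 ≤ Real.sin ψ := Real.sin_nonneg_of_nonneg_of_le_pi h0 (by linarith [Real.pi_pos])
    nlinarith

theorem sum_s_amplification {n : ℕ} (θ : Fin n → ℝ)
    (hrange : ∀ x, θ x ∈ Set.Ioc (-Real.pi) Real.pi)
    (M : ℕ) (β c : ℕ → ℝ)
    (hβ0 : β 0 = Real.pi / 2) (hβdec : ∀ k < M, β (k + 1) < β k) (hβM : 0 ≤ β M)
    (hc0 : 0 ≤ c 0) (hcmono : ∀ k < M, c k ≤ c (k + 1))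
    (hcard : ∀ k ≤ M, c k ≤ ((Cset θ (β k)).card : ℝ)) :
    (∑ x, sFun (θ x)) ≥
        (∑ k ∈ Finset.range (M + 1),
          (c k - if k = 0 then 0 else c (k - 1)) * Real.sin (β k) ^ 2) ∧
      (∑ k ∈ Finset.range (M + 1),
          (c k - if k = 0 then 0 else c (k - 1)) * Real.sin (β k) ^ 2) ≥
        c M * Real.sin (β M) ^ 2 := by
  -- monotonicity of β
  have hβmono : ∀ j k, j ≤ k → k ≤ M → β k ≤ β j := by
    intro j k hjk hkM
    induction k with
    | zero => simp_all
    | succ k ih =>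
      rcases Nat.lt_or_ge j (k + 1) with h | h
      · have h1 := ih (by omega) (by omega)
        have h2 := hβdec k (by omega)
        linarith
      · have : j = k + 1 := by omega
        simp [this]
  have hβub : ∀ k ≤ M, β k ≤ Real.pi / 2 := fun k hk => hβ0 ▸ hβmono 0 k (by omega) hk
  have hβlb : ∀ k ≤ M, 0 ≤ β k := fun k hk => le_trans hβM (hβmono k M hk le_rfl)
  -- monotonicity of c
  have hcm : ∀ j k, j ≤ k → k ≤ M → c j ≤ c k := by
    intro j k hjk hkM
    induction k with
    | zero => simp_all
    | succ k ih =>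
      rcases Nat.lt_or_ge j (k + 1) with h | h
      · have h1 := ih (by omega) (by omega)
        have h2 := hcmono k (by omega)
        linarith
      · have : j = k + 1 := by omega
        simp [this]
  have hcpos : ∀ k ≤ M, 0 ≤ c k := fun k hk => le_trans hc0 (hcm 0 k (by omega) hk)
  -- sin² β is nonincreasing
  have hb : ∀ k < M, Real.sin (β (k + 1)) ^ 2 ≤ Real.sin (β k) ^ 2 := by
    intro k hk
    have h1 : 0 ≤ β (k + 1) := hβlb (k + 1) (by omega)
    have h2 : β (k + 1) ≤ β k := le_of_lt (hβdec k hk)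
    have h3 : β k ≤ Real.pi / 2 := hβub k (by omega)
    have hs1 : 0 ≤ Real.sin (β (k + 1)) :=
      Real.sin_nonneg_of_nonneg_of_le_pi h1 (by linarith [Real.pi_pos])
    have hs2 : Real.sin (β (k + 1)) ≤ Real.sin (β k) :=
      Real.strictMonoOn_sin.monotoneOn ⟨by linarith [Real.pi_pos], by linarith⟩
        ⟨by linarith [Real.pi_pos], h3⟩ h2
    nlinarith
  -- key layered bound
  have key : ∀ m ≤ M, ∑ x ∈ Cset θ (β m), sFun (θ x) ≥
      ∑ k ∈ Finset.range m, ((Cset θ (β k)).card : ℝ)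
        * (Real.sin (β k) ^ 2 - Real.sin (β (k + 1)) ^ 2)
      + ((Cset θ (β m)).card : ℝ) * Real.sin (β m) ^ 2 := by
    intro m hm
    induction m with
    | zero =>
      simp only [Finset.range_zero, Finset.sum_empty, zero_add, ge_iff_le]
      calc ((Cset θ (β 0)).card : ℝ) * Real.sin (β 0) ^ 2
          = ∑ _x ∈ Cset θ (β 0), Real.sin (β 0) ^ 2 := by
            rw [Finset.sum_const, nsmul_eq_mul]
        _ ≤ ∑ x ∈ Cset θ (β 0), sFun (θ x) := by
            apply Finset.sum_le_sum
            intro x hx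
            have hx' : β 0 ≤ |θ x| := (Finset.mem_filter.mp hx).2
            exact sFun_ge _ _ (hβlb 0 (by omega)) (hβub 0 (by omega)) hx'
    | succ m ih =>
      have him := ih (by omega)
      have hsub : Cset θ (β m) ⊆ Cset θ (β (m + 1)) := by
        intro x hx
        simp only [Cset, Finset.mem_filter, Finset.mem_univ, true_and] at hx ⊢
        have := hβdec m (by omega)
        linarith
      have hsplit : ∑ x ∈ Cset θ (β (m + 1)), sFun (θ x)
          = ∑ x ∈ Cset θ (β (m + 1)) \ Cset θ (β m), sFun (θ x)
            + ∑ x ∈ Cset θ (β m), sFun (θ x) :=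
        (Finset.sum_sdiff hsub).symm
      have hdiff : ((Cset θ (β (m + 1)) \ Cset θ (β m)).card : ℝ)
          = ((Cset θ (β (m + 1))).card : ℝ) - ((Cset θ (β m)).card : ℝ) := by
        rw [Finset.card_sdiff_of_subset hsub, Nat.cast_sub (Finset.card_le_card hsub)]
      have hlow : ∑ x ∈ Cset θ (β (m + 1)) \ Cset θ (β m), sFun (θ x)
          ≥ (((Cset θ (β (m + 1))).card : ℝ) - ((Cset θ (β m)).card : ℝ))
            * Real.sin (β (m + 1)) ^ 2 := by
        rw [← hdiff]
        calc ((Cset θ (β (m + 1)) \ Cset θ (β m)).card : ℝ) * Real.sin (β (m + 1)) ^ 2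
            = ∑ _x ∈ Cset θ (β (m + 1)) \ Cset θ (β m), Real.sin (β (m + 1)) ^ 2 := by
              rw [Finset.sum_const, nsmul_eq_mul]
          _ ≤ _ := by
              apply Finset.sum_le_sum
              intro x hx
              have hx' : β (m + 1) ≤ |θ x| :=
                (Finset.mem_filter.mp (Finset.mem_sdiff.mp hx).1).2
              exact sFun_ge _ _ (hβlb (m + 1) hm) (hβub (m + 1) hm) hx'
      rw [hsplit, Finset.sum_range_succ]
      linarith
  have keyM := key M le_rfl
  -- the Abel identity
  have habel := abel_aux c (fun k => Real.sin (β k) ^ 2) M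
  constructor
  · have huniv : ∑ x ∈ Cset θ (β M), sFun (θ x) ≤ ∑ x, sFun (θ x) := by
      apply Finset.sum_le_sum_of_subset_of_nonneg (Finset.subset_univ _)
      intro x _ _
      exact sFun_nonneg _
    have hcomp : ∑ k ∈ Finset.range M, c k
          * (Real.sin (β k) ^ 2 - Real.sin (β (k + 1)) ^ 2)
        + c M * Real.sin (β M) ^ 2
        ≤ ∑ k ∈ Finset.range M, ((Cset θ (β k)).card : ℝ)
          * (Real.sin (β k) ^ 2 - Real.sin (β (k + 1)) ^ 2)
        + ((Cset θ (β M)).card : ℝ) * Real.sin (β M) ^ 2 := by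
      apply add_le_add
      · apply Finset.sum_le_sum
        intro k hk
        have hk' := Finset.mem_range.mp hk
        apply mul_le_mul_of_nonneg_right (hcard k (by omega))
        have := hb k hk'
        linarith
      · apply mul_le_mul_of_nonneg_right (hcard M le_rfl)
        positivity
    rw [habel]
    linarith
  · rw [habel]
    have hsum : 0 ≤ ∑ k ∈ Finset.range M, c k
        * (Real.sin (β k) ^ 2 - Real.sin (β (k + 1)) ^ 2) := by
      apply Finset.sum_nonneg
      intro k hk
      have hk' := Finset.mem_range.mp hk
      have := hb k hk'
      have := hcpos k (by omega)
      nlinarith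
    linarith
end

section
/- Amplification step I: let θ be a stable state of the homogeneous Kuramoto model on an (n,d,α,c⁻,c⁺)-expander graph G with c⁻ < c⁺, taking values in (−π, π], with ρ₁(θ) real and non-negative. Let 0 < ε < 1 + c⁻ and ρ > 0. If the angles 0 < γ < β ≤ π/2 satisfy sin(β − γ) ≥ 2(1 + ρ)α/(1 + c⁻ − ε), then |C_γ(θ)| ≥ min{ (1 + ε/(c⁺ − c⁻))·|C_β(θ)| , ραn , n/2 }. -/
open Finset

section AuxiliaryLemmas

open Finset

/-- indicator vector of a finite set -/
def ind {n : ℕ} (X : Finset (Fin n)) : Fin n → ℝ := fun x => if x ∈ X then 1 else 0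

/-- bilinear form of a matrix as a double sum -/
def qf {n : ℕ} (M : Matrix (Fin n) (Fin n) ℝ) (u v : Fin n → ℝ) : ℝ :=
  ∑ x, ∑ y, u x * M x y * v y

lemma qf_eq_dot {n : ℕ} (M : Matrix (Fin n) (Fin n) ℝ) (u v : Fin n → ℝ) :
    qf M u v = dotProduct u (M.mulVec v) := by
  unfold qf
  simp [Matrix.mulVec, dotProduct, Finset.mul_sum, mul_assoc]

lemma qf_psd_nonneg {n : ℕ} {M : Matrix (Fin n) (Fin n) ℝ} (h : M.PosSemidef) (v : Fin n → ℝ) :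
    0 ≤ qf M v v := by
  rw [qf_eq_dot]; simpa using h.dotProduct_mulVec_nonneg v

lemma qf_symm {n : ℕ} {M : Matrix (Fin n) (Fin n) ℝ} (h : M.IsHermitian) (u v : Fin n → ℝ) :
    qf M u v = qf M v u := by
  unfold qf
  rw [Finset.sum_comm]
  exact Finset.sum_congr rfl fun x _ => Finset.sum_congr rfl fun y _ => by
    have hs : M x y = M y x := by simpa using h.apply y x
    rw [hs]; ring

lemma qf_cs {n : ℕ} {M : Matrix (Fin n) (Fin n) ℝ} (h : M.PosSemidef) (u v : Fin n → ℝ) :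
    qf M u v ^ 2 ≤ qf M u u * qf M v v := by
  have hbil : ∀ t : ℝ, qf M (fun i => u i + t * v i) (fun i => u i + t * v i)
      = qf M v v * (t * t) + (2 * qf M u v) * t + qf M u u := by
    intro t
    have e1 : qf M (fun i => u i + t * v i) (fun i => u i + t * v i)
        = ∑ x, ∑ y, (u x * M x y * u y + t * (u x * M x y * v y)
            + t * (v x * M x y * u y) + (t * t) * (v x * M x y * v y)) := by
      unfold qf
      exact Finset.sum_congr rfl fun x _ => Finset.sum_congr rfl fun y _ => by ring
    rw [e1]
    have e2 : ∀ x : Fin n, ∑ y, (u x * M x y * u y + t * (u x * M x y * v y)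
            + t * (v x * M x y * u y) + (t * t) * (v x * M x y * v y))
        = (∑ y, u x * M x y * u y) + t * (∑ y, u x * M x y * v y)
            + t * (∑ y, v x * M x y * u y) + (t * t) * (∑ y, v x * M x y * v y) := by
      intro x
      rw [Finset.sum_add_distrib, Finset.sum_add_distrib, Finset.sum_add_distrib,
        Finset.mul_sum, Finset.mul_sum, Finset.mul_sum]
    rw [Finset.sum_congr rfl fun x _ => e2 x]
    rw [Finset.sum_add_distrib, Finset.sum_add_distrib, Finset.sum_add_distrib,
      ← Finset.mul_sum, ← Finset.mul_sum, ← Finset.mul_sum]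
    have hvu : qf M v u = qf M u v := (qf_symm h.1 v u)
    unfold qf at *
    rw [hvu]
    ring
  have hnn : ∀ t : ℝ, 0 ≤ qf M v v * (t * t) + (2 * qf M u v) * t + qf M u u := by
    intro t
    have := qf_psd_nonneg h (fun i => u i + t * v i)
    rwa [hbil t] at this
  have hd := discrim_le_zero hnn
  unfold discrim at hd
  nlinarith [hd]

set_option synthInstance.maxHeartbeats 1000000 in
lemma dot_le_opNorm {n : ℕ} (M : Matrix (Fin n) (Fin n) ℝ) (u v : Fin n → ℝ) :
    dotProduct u (M.mulVec v) ≤ opNorm M * Real.sqrt (∑ x, u x ^ 2) * Real.sqrt (∑ x, v x ^ 2) := by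
  classical
  set u' : EuclideanSpace ℝ (Fin n) := (WithLp.equiv 2 _).symm u with hu'
  set v' : EuclideanSpace ℝ (Fin n) := (WithLp.equiv 2 _).symm v with hv'
  have h1 : dotProduct u (M.mulVec v) = (inner ℝ u' (Matrix.toEuclideanLin M v') : ℝ) := by
    rw [Matrix.toEuclideanLin_apply]
    rw [PiLp.inner_apply]
    simp [hu', hv', dotProduct, WithLp.equiv_symm_apply, mul_comm]
  have h2 : (inner ℝ u' (Matrix.toEuclideanLin M v') : ℝ) ≤ ‖u'‖ * ‖Matrix.toEuclideanLin M v'‖ :=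
    real_inner_le_norm _ _
  have h3 : ‖Matrix.toEuclideanLin M v'‖ ≤ opNorm M * ‖v'‖ := by
    have h := ContinuousLinearMap.le_opNorm (LinearMap.toContinuousLinearMap (Matrix.toEuclideanLin M)) v'
    rw [LinearMap.coe_toContinuousLinearMap'] at h
    exact h
  have h4 : ‖u'‖ = Real.sqrt (∑ x, u x ^ 2) := by
    rw [EuclideanSpace.norm_eq]
    congr 1
    exact Finset.sum_congr rfl fun i _ => by
      rw [hu', WithLp.equiv_symm_apply, PiLp.toLp_apply]; rw [Real.norm_eq_abs, sq_abs]
  have h5 : ‖v'‖ = Real.sqrt (∑ x, v x ^ 2) := by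
    rw [EuclideanSpace.norm_eq]
    congr 1
    exact Finset.sum_congr rfl fun i _ => by
      rw [hv', WithLp.equiv_symm_apply, PiLp.toLp_apply]; rw [Real.norm_eq_abs, sq_abs]
  calc dotProduct u (M.mulVec v) = (inner ℝ u' (Matrix.toEuclideanLin M v') : ℝ) := h1
    _ ≤ ‖u'‖ * ‖Matrix.toEuclideanLin M v'‖ := h2
    _ ≤ ‖u'‖ * (opNorm M * ‖v'‖) := mul_le_mul_of_nonneg_left h3 (norm_nonneg _)
    _ = opNorm M * ‖u'‖ * ‖v'‖ := by ring
    _ = opNorm M * Real.sqrt (∑ x, u x ^ 2) * Real.sqrt (∑ x, v x ^ 2) := by rw [h4, h5]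

lemma qf_le_opNorm {n : ℕ} (M : Matrix (Fin n) (Fin n) ℝ) (u v : Fin n → ℝ) :
    qf M u v ≤ opNorm M * Real.sqrt (∑ x, u x ^ 2) * Real.sqrt (∑ x, v x ^ 2) := by
  rw [qf_eq_dot]; exact dot_le_opNorm M u v

lemma neg_qf_le_opNorm {n : ℕ} (M : Matrix (Fin n) (Fin n) ℝ) (u v : Fin n → ℝ) :
    -qf M u v ≤ opNorm M * Real.sqrt (∑ x, u x ^ 2) * Real.sqrt (∑ x, v x ^ 2) := by
  have h := qf_le_opNorm M (fun x => -u x) v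
  have e : qf M (fun x => -u x) v = -qf M u v := by
    unfold qf
    rw [← Finset.sum_neg_distrib]
    exact Finset.sum_congr rfl fun x _ => by
      rw [← Finset.sum_neg_distrib]
      exact Finset.sum_congr rfl fun y _ => by ring
  have e2 : ∑ x, (-u x) ^ 2 = ∑ x, u x ^ 2 :=
    Finset.sum_congr rfl fun x _ => by ring
  rw [e, e2] at h
  exact h

lemma ind_sq_sum {n : ℕ} (X : Finset (Fin n)) : ∑ x, ind X x ^ 2 = (X.card : ℝ) := by
  unfold ind
  rw [Finset.sum_congr rfl fun x _ => by
    show (if x ∈ X then (1:ℝ) else 0) ^ 2 = (if x ∈ X then (1:ℝ) else 0)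
    split_ifs <;> norm_num]
  rw [Finset.sum_ite_mem, Finset.univ_inter, Finset.sum_const, nsmul_eq_mul, mul_one]

lemma qf_ind {n : ℕ} (M : Matrix (Fin n) (Fin n) ℝ) (X Y : Finset (Fin n)) :
    qf M (ind X) (ind Y) = ∑ x ∈ X, ∑ y ∈ Y, M x y := by
  unfold qf ind
  have e1 : ∀ x : Fin n, ∑ y, (if x ∈ X then (1:ℝ) else 0) * M x y * (if y ∈ Y then (1:ℝ) else 0)
      = if x ∈ X then (∑ y ∈ Y, M x y) else 0 := by
    intro x
    rw [show (∑ y, (if x ∈ X then (1:ℝ) else 0) * M x y * (if y ∈ Y then (1:ℝ) else 0))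
        = ∑ y, (if x ∈ X then ((if y ∈ Y then M x y else 0)) else 0) from
      Finset.sum_congr rfl fun y _ => by split_ifs <;> ring]
    split_ifs with h
    · rw [Finset.sum_ite_mem, Finset.univ_inter]
    · simp
  rw [Finset.sum_congr rfl fun x _ => e1 x, Finset.sum_ite_mem, Finset.univ_inter]

lemma qf_add {n : ℕ} (P Q : Matrix (Fin n) (Fin n) ℝ) (u v : Fin n → ℝ) :
    qf (P + Q) u v = qf P u v + qf Q u v := by
  unfold qf
  rw [← Finset.sum_add_distrib]
  exact Finset.sum_congr rfl fun x _ => by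
    rw [← Finset.sum_add_distrib]
    exact Finset.sum_congr rfl fun y _ => by
      rw [Matrix.add_apply]; ring

lemma qf_sub {n : ℕ} (P Q : Matrix (Fin n) (Fin n) ℝ) (u v : Fin n → ℝ) :
    qf (P - Q) u v = qf P u v - qf Q u v := by
  unfold qf
  rw [← Finset.sum_sub_distrib]
  exact Finset.sum_congr rfl fun x _ => by
    rw [← Finset.sum_sub_distrib]
    exact Finset.sum_congr rfl fun y _ => by
      rw [Matrix.sub_apply]; ring

lemma qf_smul {n : ℕ} (c : ℝ) (P : Matrix (Fin n) (Fin n) ℝ) (u v : Fin n → ℝ) :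
    qf (c • P) u v = c * qf P u v := by
  unfold qf
  rw [Finset.mul_sum]
  exact Finset.sum_congr rfl fun x _ => by
    rw [Finset.mul_sum]
    exact Finset.sum_congr rfl fun y _ => by
      rw [Matrix.smul_apply, smul_eq_mul]; ring

lemma qf_one {n : ℕ} (u v : Fin n → ℝ) :
    qf (1 : Matrix (Fin n) (Fin n) ℝ) u v = ∑ x, u x * v x := by
  unfold qf
  exact Finset.sum_congr rfl fun x _ => by
    rw [show (∑ y, u x * (1 : Matrix (Fin n) (Fin n) ℝ) x y * v y)
        = ∑ y, (if x = y then u x * v y else 0) from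
      Finset.sum_congr rfl fun y _ => by
        rw [Matrix.one_apply]; split_ifs <;> ring]
    rw [Finset.sum_ite_eq univ x fun y => u x * v y]
    simp

end AuxiliaryLemmas

lemma adj_nonneg {n : ℕ} {A : Matrix (Fin n) (Fin n) ℝ} (hA : IsAdjMatrix A) (x y : Fin n) :
    0 ≤ A x y := by
  rcases hA.2.1 x y with h | h <;> rw [h] <;> norm_num

lemma adj_symm {n : ℕ} {A : Matrix (Fin n) (Fin n) ℝ} (hA : IsAdjMatrix A) (x y : Fin n) :
    A x y = A y x := Matrix.IsSymm.apply hA.1 y x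

lemma stab_delta {n : ℕ} {A : Matrix (Fin n) (Fin n) ℝ} (hA : IsAdjMatrix A)
    {θ : Fin n → ℝ} (hθ : IsStable A θ) (y : Fin n) :
    0 ≤ ∑ x, A x y * Real.cos (θ x - θ y) := by
  classical
  have h := hθ.2 (fun x => if x = y then (1:ℝ) else 0)
  beta_reduce at h
  have hterm : ∀ x z : Fin n, A x z * Real.cos (θ x - θ z) *
      ((if x = y then (1:ℝ) else 0) - (if z = y then (1:ℝ) else 0)) ^ 2
      = (if x = y then (A x z * Real.cos (θ x - θ z) - (if z = y then A x z * Real.cos (θ x - θ z) else 0)) else 0)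
        + (if z = y then (A x z * Real.cos (θ x - θ z) - (if x = y then A x z * Real.cos (θ x - θ z) else 0)) else 0) := by
    intro x z
    by_cases hx : x = y <;> by_cases hz : z = y <;> simp [hx, hz] <;> ring
  have hsum : ∑ x, ∑ z, A x z * Real.cos (θ x - θ z) *
      ((if x = y then (1:ℝ) else 0) - (if z = y then (1:ℝ) else 0)) ^ 2
      = 2 * ∑ x, A x y * Real.cos (θ x - θ y) := by
    rw [Finset.sum_congr rfl fun x _ => Finset.sum_congr rfl fun z _ => hterm x z]
    rw [Finset.sum_congr rfl fun x _ => Finset.sum_add_distrib]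
    rw [Finset.sum_add_distrib]
    have hAyy : A y y = 0 := hA.2.2 y
    have pull : ∀ (P : Prop) [Decidable P] (f : Fin n → ℝ), ∑ z, (if P then f z else 0)
        = if P then ∑ z, f z else 0 := by
      intro P _ f; split_ifs <;> simp
    have p1 : ∑ x, ∑ z, (if x = y then (A x z * Real.cos (θ x - θ z) - (if z = y then A x z * Real.cos (θ x - θ z) else 0)) else 0)
        = ∑ z, A y z * Real.cos (θ y - θ z) := by
      rw [Finset.sum_congr rfl fun x _ => pull (x = y) (fun z => A x z * Real.cos (θ x - θ z) - (if z = y then A x z * Real.cos (θ x - θ z) else 0))]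
      rw [Finset.sum_ite_eq' univ y]
      simp [Finset.sum_sub_distrib, Finset.sum_ite_eq' univ y, hAyy]
    have p2 : ∑ x, ∑ z, (if z = y then (A x z * Real.cos (θ x - θ z) - (if x = y then A x z * Real.cos (θ x - θ z) else 0)) else 0)
        = ∑ x, A x y * Real.cos (θ x - θ y) := by
      rw [Finset.sum_comm]
      rw [Finset.sum_congr rfl fun z _ => pull (z = y) (fun x => A x z * Real.cos (θ x - θ z) - (if x = y then A x z * Real.cos (θ x - θ z) else 0))]
      rw [Finset.sum_ite_eq' univ y]
      simp [Finset.sum_sub_distrib, Finset.sum_ite_eq' univ y, hAyy]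
    rw [p1, p2]
    have p3 : ∑ z, A y z * Real.cos (θ y - θ z) = ∑ x, A x y * Real.cos (θ x - θ y) := by
      exact Finset.sum_congr rfl fun z _ => by
        rw [adj_symm hA y z, Real.cos_sub, Real.cos_sub]; ring
    rw [p3]; ring
  rw [hsum] at h
  linarith


lemma ptwise {a b : ℝ} (ha1 : -Real.pi < a) (ha2 : a ≤ Real.pi) (hb : |b| ≤ Real.pi / 2) :
    (if 0 ≤ b then (1:ℝ) else -1) * Real.sin (a - b) ≤ Real.sin (|a| - |b|) := by
  have hpi := Real.pi_pos
  obtain ⟨hb1, hb2⟩ := abs_le.mp hb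
  have hcb : 0 ≤ Real.cos b := Real.cos_nonneg_of_mem_Icc ⟨by linarith, by linarith⟩
  rcases le_or_gt 0 b with hb0 | hb0
  · rw [if_pos hb0, one_mul, abs_of_nonneg hb0]
    rcases le_or_gt 0 a with ha0 | ha0
    · rw [abs_of_nonneg ha0]
    · rw [abs_of_neg ha0]
      have h1 : 0 ≤ Real.sin (-a) := Real.sin_nonneg_of_nonneg_of_le_pi (by linarith) (by linarith)
      rw [Real.sin_neg] at h1
      rw [Real.sin_sub, Real.sin_sub, Real.sin_neg, Real.cos_neg]
      nlinarith
  · rw [if_neg (not_le.mpr hb0), abs_of_neg hb0]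
    rcases le_or_gt a 0 with ha0 | ha0
    · rw [abs_of_nonpos ha0]
      have h : -a - -b = -(a - b) := by ring
      rw [h, Real.sin_neg]
      linarith
    · rw [abs_of_pos ha0]
      have h1 : 0 ≤ Real.sin a := Real.sin_nonneg_of_nonneg_of_le_pi (by linarith) (by linarith)
      rw [Real.sin_sub, Real.sin_sub, Real.sin_neg, Real.cos_neg]
      nlinarith

lemma key_vertex {n : ℕ} {A : Matrix (Fin n) (Fin n) ℝ} (hA : IsAdjMatrix A)
    {θ : Fin n → ℝ} (hθ : IsStable A θ)
    (hrange : ∀ x, θ x ∈ Set.Ioc (-Real.pi) Real.pi) (y : Fin n) :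
    0 ≤ ∑ x, A x y * kerK (θ x) (θ y) := by
  have hpi := Real.pi_pos
  rcases le_or_gt (|θ y|) (Real.pi / 2) with hy | hy
  · -- small case: use equilibrium
    have hmin : min (|θ y|) (Real.pi / 2) = |θ y| := min_eq_left hy
    have hker : ∀ x, kerK (θ x) (θ y) = Real.sin (|θ x| - |θ y|) := by
      intro x; rw [kerK, hmin]
    set σ : ℝ := if 0 ≤ θ y then (1:ℝ) else -1 with hσ
    have hbound : ∀ x, σ * (A x y * Real.sin (θ x - θ y)) ≤ A x y * kerK (θ x) (θ y) := by
      intro x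
      rw [hker x]
      have hp := ptwise (hrange x).1 (hrange x).2 hy
      calc σ * (A x y * Real.sin (θ x - θ y))
          = A x y * (σ * Real.sin (θ x - θ y)) := by ring
        _ ≤ A x y * Real.sin (|θ x| - |θ y|) :=
            mul_le_mul_of_nonneg_left hp (adj_nonneg hA x y)
    calc (0:ℝ) = σ * ∑ x, A x y * Real.sin (θ x - θ y) := by rw [hθ.1 y]; ring
      _ = ∑ x, σ * (A x y * Real.sin (θ x - θ y)) := by rw [Finset.mul_sum]
      _ ≤ ∑ x, A x y * kerK (θ x) (θ y) := Finset.sum_le_sum fun x _ => hbound x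
  · -- large case: use delta stability
    have hmin : min (|θ y|) (Real.pi / 2) = Real.pi / 2 := min_eq_right hy.le
    have hker : ∀ x, kerK (θ x) (θ y) = -Real.cos (θ x) := by
      intro x
      rw [kerK, hmin, Real.sin_sub_pi_div_two, Real.cos_abs]
    have hQ := hθ.1 y
    have hP := stab_delta hA hθ y
    have expand : ∑ x, A x y * Real.cos (θ x)
        = Real.cos (θ y) * (∑ x, A x y * Real.cos (θ x - θ y))
          - Real.sin (θ y) * (∑ x, A x y * Real.sin (θ x - θ y)) := by
      rw [Finset.mul_sum, Finset.mul_sum, ← Finset.sum_sub_distrib]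
      apply Finset.sum_congr rfl
      intro x _
      have hc : Real.cos (θ x) = Real.cos ((θ x - θ y) + θ y) := by ring_nf
      rw [hc, Real.cos_add]
      ring
    have hsum : ∑ x, A x y * kerK (θ x) (θ y) = -∑ x, A x y * Real.cos (θ x) := by
      rw [← Finset.sum_neg_distrib]
      exact Finset.sum_congr rfl fun x _ => by rw [hker x]; ring
    rw [hsum, expand, hQ]
    have hcy : Real.cos (θ y) ≤ 0 := by
      rw [← Real.cos_abs]
      exact Real.cos_nonpos_of_pi_div_two_le_of_le hy.le (by
        have := abs_le.mpr ⟨(hrange y).1.le, (hrange y).2⟩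
        linarith)
    nlinarith

set_option maxHeartbeats 1000000 in
theorem amplification_step_I {n : ℕ} (A : Matrix (Fin n) (Fin n) ℝ)
    (hA : IsAdjMatrix A) (d α cm cp : ℝ) (hd : 0 < d) (hα : 0 < α)
    (hlt : cm < cp) (hexp : IsExpander5 A d α cm cp)
    (θ : Fin n → ℝ) (hθ : IsStable A θ)
    (hrange : ∀ x, θ x ∈ Set.Ioc (-Real.pi) Real.pi)
    (him : (daido 1 θ).im = 0) (hre : 0 ≤ (daido 1 θ).re)
    (ε ρ : ℝ) (hε0 : 0 < ε) (hε1 : ε < 1 + cm) (hρ : 0 < ρ)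
    (γ β : ℝ) (hγ : 0 < γ) (hγβ : γ < β) (hβ : β ≤ Real.pi / 2)
    (hsin : Real.sin (β - γ) ≥ 2 * (1 + ρ) * α / (1 + cm - ε)) :
    ((Cset θ γ).card : ℝ) ≥
      min (min ((1 + ε / (cp - cm)) * (Cset θ β).card) (ρ * α * n)) ((n : ℝ) / 2) := by
  classical
  by_contra hcon
  push_neg at hcon
  rw [lt_min_iff, lt_min_iff] at hcon
  obtain ⟨⟨hm1, hm2⟩, hm3⟩ := hcon
  have hpi := Real.pi_pos
  set Γ : Finset (Fin n) := Cset θ γ with hΓdef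
  set B : Finset (Fin n) := Cset θ β with hBdef
  set b : ℝ := (B.card : ℝ) with hbdef
  set m : ℝ := (Γ.card : ℝ) with hmdef
  have hBsub : B ⊆ Γ := by
    intro x hx
    simp only [hBdef, hΓdef, Cset, Finset.mem_filter, Finset.mem_univ, true_and] at hx ⊢
    linarith
  have hbm : b ≤ m := by
    rw [hbdef, hmdef]
    exact_mod_cast Finset.card_le_card hBsub
  have hm0 : 0 ≤ m := Nat.cast_nonneg _
  have hb1 : 1 ≤ b := by
    by_contra hb
    push_neg at hb
    have hb0 : B.card = 0 := by
      by_contra h0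
      have : 1 ≤ B.card := Nat.one_le_iff_ne_zero.mpr h0
      have h1 : (1:ℝ) ≤ b := by rw [hbdef]; exact_mod_cast this
      linarith
    rw [hbdef] at hm1
    rw [hb0] at hm1
    norm_num at hm1
    linarith
  have hb0 : 0 < b := by linarith
  have hn0 : 0 < (n:ℝ) := by
    have : b ≤ (n:ℝ) := by
      have h2 := Finset.card_le_card (Finset.subset_univ B)
      simp only [Finset.card_univ, Fintype.card_fin] at h2
      rw [hbdef]
      exact_mod_cast h2
    linarith
  have hnne : (n:ℝ) ≠ 0 := ne_of_gt hn0
  set δc : ℝ := cp - cm with hδcdef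
  have hδc : 0 < δc := by rw [hδcdef]; linarith
  have hmb : δc * (m - b) ≤ ε * b := by
    have e : δc * ((1 + ε/δc) * b) = δc*b + ε*b := by
      field_simp [hδc.ne']
      try ring
    have h2 : δc * m < δc*b + ε*b := by
      rw [← e]
      exact (mul_lt_mul_iff_right₀ hδc).mpr hm1
    nlinarith
  have hmbnn : (0:ℝ) ≤ m - b := by linarith
  -- the three index sets: B, D := Γ \ B, C := univ \ Γ
  set D : Finset (Fin n) := Γ \ B with hDdef
  set C : Finset (Fin n) := Finset.univ \ Γ with hCdef
  have hDcard : (D.card : ℝ) = m - b := by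
    rw [hDdef, Finset.card_sdiff_of_subset hBsub]
    rw [Nat.cast_sub (Finset.card_le_card hBsub)]
  -- degree function
  set deg : Fin n → ℝ := fun x => ∑ z, A x z with hdegdef
  set s₁ : ℝ := Real.sin (β - γ) with hs1def
  have hs1pos : 0 < s₁ := by
    rw [hs1def]
    apply Real.sin_pos_of_pos_of_lt_pi (by linarith)
    linarith
  have hs1le : s₁ ≤ 1 := Real.sin_le_one _
  have hκε : 0 < 1 + cm - ε := by linarith
  have hsin' : 2 * (1 + ρ) * α ≤ s₁ * (1 + cm - ε) := by
    rw [hs1def]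
    rw [ge_iff_le, div_le_iff₀ hκε] at hsin
    linarith
  
  -- edge-count quantities
  set eBB : ℝ := ∑ x ∈ B, ∑ y ∈ B, A x y with heBBdef
  set eDB : ℝ := ∑ x ∈ D, ∑ y ∈ B, A x y with heDBdef
  set eCB : ℝ := ∑ x ∈ C, ∑ y ∈ B, A x y with heCBdef
  set eΓB : ℝ := ∑ x ∈ Γ, ∑ y ∈ B, A x y with heΓBdef
  have hmemΓ : ∀ x : Fin n, x ∈ Γ ↔ γ ≤ |θ x| := by
    intro x; simp [hΓdef, Cset]
  have hmemB : ∀ x : Fin n, x ∈ B ↔ β ≤ |θ x| := by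
    intro x; simp [hBdef, Cset]
  -- Step A : key inequality s₁ * eCB ≤ eBB
  have hkey : s₁ * eCB ≤ eBB := by
    have hyb : ∀ y ∈ B, (0:ℝ) ≤ (∑ x ∈ B, A x y) - s₁ * (∑ x ∈ C, A x y) := by
      intro y hy
      have hyβ : β ≤ |θ y| := (hmemB y).mp hy
      set μ : ℝ := min (|θ y|) (Real.pi / 2) with hμdef
      have hμ1 : β ≤ μ := le_min hyβ hβ
      have hμ2 : μ ≤ Real.pi / 2 := min_le_right _ _
      have hkv := key_vertex hA hθ hrange y
      have hsplit : ∑ x, A x y * kerK (θ x) (θ y)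
          = (∑ x ∈ C, A x y * kerK (θ x) (θ y)) + ((∑ x ∈ D, A x y * kerK (θ x) (θ y))
            + (∑ x ∈ B, A x y * kerK (θ x) (θ y))) := by
        rw [hCdef, hDdef]
        rw [Finset.sum_sdiff hBsub, Finset.sum_sdiff (Finset.subset_univ Γ)]
      have hBpart : ∑ x ∈ B, A x y * kerK (θ x) (θ y) ≤ ∑ x ∈ B, A x y := by
        apply Finset.sum_le_sum
        intro x _
        have : kerK (θ x) (θ y) ≤ 1 := Real.sin_le_one _
        nlinarith [adj_nonneg hA x y]
      have hDpart : ∑ x ∈ D, A x y * kerK (θ x) (θ y) ≤ 0 := by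
        apply Finset.sum_nonpos
        intro x hx
        rw [hDdef, Finset.mem_sdiff] at hx
        have hxβ : |θ x| < β := by
          by_contra hc
          exact hx.2 ((hmemB x).mpr (not_lt.mp hc))
        have hker : kerK (θ x) (θ y) ≤ 0 := by
          rw [kerK, ← hμdef]
          apply Real.sin_nonpos_of_nonpos_of_neg_pi_le
          · linarith [abs_nonneg (θ x)]
          · linarith [abs_nonneg (θ x)]
        exact mul_nonpos_of_nonneg_of_nonpos (adj_nonneg hA x y) hker
      have hCpart : ∑ x ∈ C, A x y * kerK (θ x) (θ y) ≤ ∑ x ∈ C, A x y * (-s₁) := by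
        apply Finset.sum_le_sum
        intro x hx
        rw [hCdef, Finset.mem_sdiff] at hx
        have hxγ : |θ x| < γ := by
          by_contra hc
          exact hx.2 ((hmemΓ x).mpr (not_lt.mp hc))
        have hker : kerK (θ x) (θ y) ≤ -s₁ := by
          rw [kerK, ← hμdef]
          have harg1 : -(Real.pi/2) ≤ |θ x| - μ := by linarith [abs_nonneg (θ x)]
          have harg2 : |θ x| - μ ≤ γ - β := by linarith
          have hmono := Real.strictMonoOn_sin.monotoneOn
            (a := |θ x| - μ) (b := γ - β)
            ⟨by linarith, by linarith⟩ ⟨by linarith, by linarith [Real.pi_pos]⟩ harg2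
          have : Real.sin (γ - β) = -s₁ := by
            rw [hs1def, show γ - β = -(β - γ) by ring, Real.sin_neg]
          linarith
        exact mul_le_mul_of_nonneg_left hker (adj_nonneg hA x y)
      have hCpart' : ∑ x ∈ C, A x y * (-s₁) = -(s₁ * ∑ x ∈ C, A x y) := by
        rw [Finset.mul_sum, ← Finset.sum_neg_distrib]
        exact Finset.sum_congr rfl fun x _ => by ring
      rw [hsplit] at hkv
      rw [hCpart'] at hCpart
      linarith
    have hsum : 0 ≤ ∑ y ∈ B, ((∑ x ∈ B, A x y) - s₁ * (∑ x ∈ C, A x y)) :=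
      Finset.sum_nonneg hyb
    rw [Finset.sum_sub_distrib] at hsum
    rw [← Finset.mul_sum] at hsum
    rw [Finset.sum_comm (s := B) (t := B), Finset.sum_comm (s := B) (t := C)] at hsum
    rw [heBBdef, heCBdef]
    linarith
  
  -- Step B : identities
  have hEuniv : ∑ x, ∑ y ∈ B, A x y = ∑ y ∈ B, deg y := by
    rw [Finset.sum_comm (f := fun x y => A x y)]
    exact Finset.sum_congr rfl fun y _ => by
      rw [hdegdef]
      exact Finset.sum_congr rfl fun x _ => adj_symm hA x y
  have hsplitC : eCB + eΓB = ∑ y ∈ B, deg y := by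
    rw [heCBdef, heΓBdef, hCdef]
    rw [← hEuniv]
    exact Finset.sum_sdiff (Finset.subset_univ Γ)
  have hΓBsplit : eDB + eBB = eΓB := by
    rw [heDBdef, heBBdef, heΓBdef, hDdef]
    exact Finset.sum_sdiff hBsub
  -- general formula for the quadratic form of lapCentered on indicators
  have sumΔ : ∀ X Y : Finset (Fin n),
      qf (lapCentered A d) (ind X) (ind Y)
      = (∑ x ∈ X ∩ Y, deg x) - (∑ x ∈ X, ∑ y ∈ Y, A x y)
        - d * ((X ∩ Y).card : ℝ) + (d/(n:ℝ)) * X.card * Y.card := by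
    intro X Y
    rw [qf_ind]
    have hentry : ∀ x y : Fin n, lapCentered A d x y
        = ((if x = y then deg x else 0) - A x y - (if x = y then d else 0)) + d/(n:ℝ) := by
      intro x y
      simp only [lapCentered, Matrix.sub_apply, Matrix.add_apply, Matrix.smul_apply,
        Matrix.diagonal_apply, Matrix.one_apply, onesMat, Matrix.of_apply, smul_eq_mul,
        mul_one, hdegdef]
      split_ifs <;> ring
    rw [Finset.sum_congr rfl fun x _ => Finset.sum_congr rfl fun y (_ : y ∈ Y) => hentry x y]
    have hinner : ∀ x : Fin n,
        ∑ y ∈ Y, (((if x = y then deg x else 0) - A x y - (if x = y then d else 0)) + d/(n:ℝ))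
        = (((if x ∈ Y then deg x else 0) - (∑ y ∈ Y, A x y) - (if x ∈ Y then d else 0))
            + (Y.card : ℝ) * (d/(n:ℝ))) := by
      intro x
      rw [Finset.sum_add_distrib, Finset.sum_sub_distrib, Finset.sum_sub_distrib]
      rw [Finset.sum_ite_eq Y x (fun _ => deg x), Finset.sum_ite_eq Y x (fun _ => d)]
      rw [Finset.sum_const, nsmul_eq_mul]
    rw [Finset.sum_congr rfl fun x _ => hinner x]
    rw [Finset.sum_add_distrib, Finset.sum_sub_distrib, Finset.sum_sub_distrib]
    rw [Finset.sum_ite_mem X Y deg, Finset.sum_ite_mem X Y (fun _ => d)]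
    rw [Finset.sum_const, Finset.sum_const, nsmul_eq_mul, nsmul_eq_mul]
    ring
  set qΓB : ℝ := qf (lapCentered A d) (ind Γ) (ind B) with hqΓBdef
  set qBB : ℝ := qf (lapCentered A d) (ind B) (ind B) with hqBBdef
  set qDB : ℝ := qf (lapCentered A d) (ind D) (ind B) with hqDBdef
  have hΓiB : Γ ∩ B = B := Finset.inter_eq_right.mpr hBsub
  have hDiB : D ∩ B = ∅ := by
    rw [hDdef]
    ext x
    simp only [Finset.mem_inter, Finset.mem_sdiff, Finset.notMem_empty, iff_false]
    rintro ⟨⟨_, hxb⟩, hxb2⟩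
    exact hxb hxb2
  have fΓB : qΓB = (∑ y ∈ B, deg y) - eΓB - d * b + (d/(n:ℝ)) * m * b := by
    rw [hqΓBdef, sumΔ Γ B, hΓiB, heΓBdef, hbdef, hmdef]
  have fBB : qBB = (∑ y ∈ B, deg y) - eBB - d * b + (d/(n:ℝ)) * b * b := by
    rw [hqBBdef, sumΔ B B, Finset.inter_self, heBBdef, hbdef]
  have fDB : qDB = -eDB + (d/(n:ℝ)) * (m - b) * b := by
    rw [hqDBdef, sumΔ D B, hDiB, heDBdef, hDcard]
    simp [hbdef]
  have hqsplit : qΓB = qBB + qDB := by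
    rw [fΓB, fBB, fDB, ← hΓBsplit]
    ring
  have hCid : eCB = d * b - (d/(n:ℝ)) * m * b + qΓB := by
    rw [fΓB]
    linarith
  
  -- Step C : bounds from PSD sandwich and operator norm
  have hMpsd := hexp.2.1
  have hM'psd := hexp.2.2
  have hindBB : ∑ x, ind B x * ind B x = b := by
    calc ∑ x, ind B x * ind B x = ∑ x, ind B x ^ 2 :=
          Finset.sum_congr rfl fun x _ => (pow_two (ind B x)).symm
      _ = ((B.card : ℕ) : ℝ) := ind_sq_sum B
      _ = b := hbdef.symm
  have hindDD : ∑ x, ind D x * ind D x = m - b := by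
    calc ∑ x, ind D x * ind D x = ∑ x, ind D x ^ 2 :=
          Finset.sum_congr rfl fun x _ => (pow_two (ind D x)).symm
      _ = ((D.card : ℕ) : ℝ) := ind_sq_sum D
      _ = m - b := hDcard
  have hindDB0 : ∑ x, ind D x * ind B x = 0 := by
    apply Finset.sum_eq_zero
    intro x _
    unfold ind
    by_cases hx : x ∈ D
    · have hxB : x ∉ B := by
        rw [hDdef, Finset.mem_sdiff] at hx
        exact hx.2
      simp [hx, hxB]
    · simp [hx]
  have hqBBlow : cm * d * b ≤ qBB := by
    have h0 := qf_psd_nonneg hMpsd (ind B)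
    rw [qf_sub, qf_smul, qf_one, hindBB] at h0
    rw [hqBBdef]
    linarith
  have hMM' : (lapCentered A d - (cm*d) • (1 : Matrix (Fin n) (Fin n) ℝ))
      + ((cp*d) • (1 : Matrix (Fin n) (Fin n) ℝ) - lapCentered A d)
      = (cp*d - cm*d) • (1 : Matrix (Fin n) (Fin n) ℝ) := by
    ext i j
    simp only [Matrix.add_apply, Matrix.sub_apply, Matrix.smul_apply, Matrix.one_apply,
      smul_eq_mul]
    split_ifs <;> ring
  have hqup : ∀ u : Fin n → ℝ,
      qf (lapCentered A d - (cm*d) • (1 : Matrix (Fin n) (Fin n) ℝ)) u u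
        ≤ (cp*d - cm*d) * ∑ x, u x * u x := by
    intro u
    have h1 := qf_psd_nonneg hM'psd u
    have h2 := qf_add (lapCentered A d - (cm*d) • (1 : Matrix (Fin n) (Fin n) ℝ))
      ((cp*d) • (1 : Matrix (Fin n) (Fin n) ℝ) - lapCentered A d) u u
    rw [hMM', qf_smul, qf_one] at h2
    linarith
  have hqMDB : qDB = qf (lapCentered A d - (cm*d) • (1 : Matrix (Fin n) (Fin n) ℝ))
      (ind D) (ind B) := by
    rw [qf_sub, qf_smul, qf_one, hindDB0, hqDBdef]
    ring
  set sX : ℝ := Real.sqrt (α * ε) with hsXdef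
  have hsX0 : 0 ≤ sX := Real.sqrt_nonneg _
  have hsX2 : sX ^ 2 = α * ε := Real.sq_sqrt (by positivity)
  have honesDB : qf (onesMat n) (ind D) (ind B) = (m - b) * b := by
    rw [qf_ind]
    calc ∑ x ∈ D, ∑ y ∈ B, onesMat n x y = ∑ x ∈ D, ∑ y ∈ B, (1:ℝ) :=
          Finset.sum_congr rfl fun x _ => Finset.sum_congr rfl fun y _ => rfl
      _ = ((D.card : ℕ):ℝ) * ((B.card : ℕ):ℝ) := by
          simp [Finset.sum_const, nsmul_eq_mul]
      _ = (m - b) * b := by rw [hDcard, hbdef]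
  have hcross : -(sX * d * b) ≤ qDB := by
    rcases le_or_gt α δc with hcase | hcase
    · -- use the operator norm bound
      have hNid : qf (A - (d/(n:ℝ)) • onesMat n) (ind D) (ind B)
          = eDB - (d/(n:ℝ)) * ((m-b) * b) := by
        rw [qf_sub, qf_smul, honesDB, qf_ind, heDBdef]
      have hop := qf_le_opNorm (A - (d/(n:ℝ)) • onesMat n) (ind D) (ind B)
      rw [ind_sq_sum, ind_sq_sum, hDcard, ← hbdef] at hop
      have hopα : opNorm (A - (d/(n:ℝ)) • onesMat n) ≤ α * d := hexp.1
      have hop2 : eDB - (d/(n:ℝ)) * ((m-b) * b) ≤ α * d * (Real.sqrt (m-b) * Real.sqrt b) := by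
        rw [hNid] at hop
        calc eDB - (d/(n:ℝ)) * ((m-b) * b)
            ≤ opNorm (A - (d/(n:ℝ)) • onesMat n) * Real.sqrt (m-b) * Real.sqrt b := hop
          _ ≤ (α * d) * Real.sqrt (m-b) * Real.sqrt b := by
              have h1 := mul_le_mul_of_nonneg_right
                (mul_le_mul_of_nonneg_right hopα (Real.sqrt_nonneg (m-b))) (Real.sqrt_nonneg b)
              linarith only [h1]
          _ = α * d * (Real.sqrt (m-b) * Real.sqrt b) := by ring
      have hss : Real.sqrt (m-b) * Real.sqrt b = Real.sqrt ((m-b)*b) :=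
        (Real.sqrt_mul hmbnn b).symm
      have u2 : α*(m-b) ≤ ε*b := by
        have u1 : α*(m-b) ≤ δc*(m-b) := mul_le_mul_of_nonneg_right hcase hmbnn
        linarith only [u1, hmb]
      have hαs : α * Real.sqrt ((m-b)*b) ≤ sX * b := by
        have key : (α * Real.sqrt ((m-b)*b))^2 ≤ (sX * b)^2 := by
          rw [mul_pow, mul_pow, Real.sq_sqrt (mul_nonneg hmbnn hb0.le), hsX2]
          have u3 : (α*(m-b))*(α*b) ≤ (ε*b)*(α*b) :=
            mul_le_mul_of_nonneg_right u2 (by positivity)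
          calc α^2*((m-b)*b) = (α*(m-b))*(α*b) := by ring
            _ ≤ (ε*b)*(α*b) := u3
            _ = α*ε*b^2 := by ring
        have h1 := Real.sqrt_le_sqrt key
        rwa [Real.sqrt_sq (by positivity), Real.sqrt_sq (by positivity)] at h1
      have hfinal : -qDB ≤ sX * d * b := by
        rw [fDB]
        have e1 : -(-eDB + (d/(n:ℝ)) * (m - b) * b) = eDB - (d/(n:ℝ)) * ((m-b)*b) := by ring
        rw [e1]
        calc eDB - (d/(n:ℝ)) * ((m-b)*b) ≤ α * d * (Real.sqrt (m-b) * Real.sqrt b) := hop2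
          _ = d * (α * Real.sqrt ((m-b)*b)) := by rw [hss]; ring
          _ ≤ d * (sX * b) := mul_le_mul_of_nonneg_left hαs hd.le
          _ = sX * d * b := by ring
      linarith only [hfinal]
    · -- use PSD Cauchy-Schwarz
      have hcs := qf_cs hMpsd (ind D) (ind B)
      rw [← hqMDB] at hcs
      have hqBB0 : 0 ≤ qf (lapCentered A d - (cm*d) • (1 : Matrix (Fin n) (Fin n) ℝ))
          (ind B) (ind B) := qf_psd_nonneg hMpsd _
      have hqDDup := hqup (ind D)
      have hqBBup := hqup (ind B)
      rw [hindDD] at hqDDup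
      rw [hindBB] at hqBBup
      have hδd : cp * d - cm * d = δc * d := by rw [hδcdef]; ring
      rw [hδd] at hqDDup hqBBup
      have hprod : qf (lapCentered A d - (cm*d) • (1 : Matrix (Fin n) (Fin n) ℝ)) (ind D) (ind D)
          * qf (lapCentered A d - (cm*d) • (1 : Matrix (Fin n) (Fin n) ℝ)) (ind B) (ind B)
          ≤ (δc * d * (m-b)) * (δc * d * b) := by
        apply mul_le_mul hqDDup hqBBup hqBB0
        positivity
      have hsq2 : qDB^2 ≤ (sX * d * b)^2 := by
        have t1 : δc*(m-b)*(δc*b) ≤ (ε*b)*(δc*b) :=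
          mul_le_mul_of_nonneg_right hmb (by positivity)
        have t2 : (ε*b)*(δc*b) ≤ (ε*b)*(α*b) := by
          apply mul_le_mul_of_nonneg_left _ (by positivity)
          exact mul_le_mul_of_nonneg_right hcase.le hb0.le
        have t3 : (δc*(m-b)*(δc*b))*(d*d) ≤ ((ε*b)*(α*b))*(d*d) :=
          mul_le_mul_of_nonneg_right (le_trans t1 t2) (mul_nonneg hd.le hd.le)
        calc qDB^2 ≤ (δc * d * (m-b)) * (δc * d * b) := le_trans hcs hprod
          _ = (δc*(m-b)*(δc*b))*(d*d) := by ring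
          _ ≤ ((ε*b)*(α*b))*(d*d) := t3
          _ = (α*ε)*(d*d)*(b*b) := by ring
          _ = (sX * d * b)^2 := by rw [mul_pow, mul_pow, hsX2]; ring
      have habs : |qDB| ≤ sX * d * b := by
        have h1 := Real.sqrt_le_sqrt hsq2
        rwa [Real.sqrt_sq_eq_abs, Real.sqrt_sq (by positivity)] at h1
      linarith only [habs, neg_abs_le qDB]
  have hAA : eBB ≤ (d/(n:ℝ)) * b * b + α * d * b := by
    have honesBB : qf (onesMat n) (ind B) (ind B) = b * b := by
      rw [qf_ind]
      calc ∑ x ∈ B, ∑ y ∈ B, onesMat n x y = ∑ x ∈ B, ∑ y ∈ B, (1:ℝ) :=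
            Finset.sum_congr rfl fun x _ => Finset.sum_congr rfl fun y _ => rfl
        _ = ((B.card : ℕ):ℝ) * ((B.card : ℕ):ℝ) := by
            simp [Finset.sum_const, nsmul_eq_mul]
        _ = b * b := by rw [hbdef]
    have hNid : qf (A - (d/(n:ℝ)) • onesMat n) (ind B) (ind B)
        = eBB - (d/(n:ℝ)) * (b * b) := by
      rw [qf_sub, qf_smul, honesBB, qf_ind, heBBdef]
    have hop := qf_le_opNorm (A - (d/(n:ℝ)) • onesMat n) (ind B) (ind B)
    rw [ind_sq_sum, ← hbdef, hNid] at hop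
    have hopα : opNorm (A - (d/(n:ℝ)) • onesMat n) ≤ α * d := hexp.1
    have hbb : Real.sqrt b * Real.sqrt b = b := Real.mul_self_sqrt hb0.le
    have hlast : eBB - (d/(n:ℝ)) * (b * b) ≤ α * d * b := by
      calc eBB - (d/(n:ℝ)) * (b * b)
          ≤ opNorm (A - (d/(n:ℝ)) • onesMat n) * Real.sqrt b * Real.sqrt b := hop
        _ ≤ (α * d) * Real.sqrt b * Real.sqrt b := by
            have h1 := mul_le_mul_of_nonneg_right
              (mul_le_mul_of_nonneg_right hopα (Real.sqrt_nonneg b)) (Real.sqrt_nonneg b)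
            linarith only [h1]
        _ = α * d * (Real.sqrt b * Real.sqrt b) := by ring
        _ = α * d * b := by rw [hbb]
    linarith only [hlast]
  -- Step D : final contradiction
  have hdb : 0 < d * b := mul_pos hd hb0
  have hdnm : (d/(n:ℝ)) * m * b ≤ ρ * α * (d * b) := by
    rw [div_mul_eq_mul_div, div_mul_eq_mul_div, div_le_iff₀ hn0]
    nlinarith only [mul_nonneg (mul_nonneg (sub_nonneg.mpr hm2.le) hd.le) hb0.le, hm2, hd, hb0, hn0]
  have hdnb : (d/(n:ℝ)) * b * b ≤ ρ * α * (d * b) := by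
    rw [div_mul_eq_mul_div, div_mul_eq_mul_div, div_le_iff₀ hn0]
    have hbρ : b ≤ ρ * α * (n:ℝ) := le_trans hbm hm2.le
    nlinarith only [mul_nonneg (mul_nonneg (sub_nonneg.mpr hbρ) hd.le) hb0.le, hbρ, hd, hb0, hn0]
  have hqΓBlow : cm * d * b - sX * d * b ≤ qΓB := by
    rw [hqsplit]
    linarith only [hqBBlow, hcross]
  have hmain : s₁ * ((1 + cm - ρ*α - sX) * (d * b)) ≤ (ρ*α + α) * (d * b) := by
    have l1 : (1 + cm - ρ*α - sX) * (d * b) ≤ d * b - (d/(n:ℝ)) * m * b + qΓB := by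
      nlinarith only [hdnm, hqΓBlow]
    have l2 : s₁ * ((1 + cm - ρ*α - sX) * (d * b)) ≤ s₁ * (d * b - (d/(n:ℝ)) * m * b + qΓB) :=
      mul_le_mul_of_nonneg_left l1 hs1pos.le
    have l3 : s₁ * (d * b - (d/(n:ℝ)) * m * b + qΓB) ≤ eBB := by
      rw [← hCid]
      exact hkey
    nlinarith only [hAA, hdnb, l2, l3]
  have hfin1 : s₁ * (1 + cm - ρ*α - sX) ≤ ρ*α + α := by
    have h := hmain
    rw [show s₁ * ((1 + cm - ρ*α - sX) * (d * b)) = (s₁ * (1 + cm - ρ*α - sX)) * (d * b) by ring] at h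
    exact le_of_mul_le_mul_right h hdb
  have h2X : 2 * sX ≤ α + ε := by
    nlinarith only [sq_nonneg (sX - ε), hsX2, hε0]
  have hs1κ : s₁ * (1 + cm - ε) ≤ 1 + cm - ε := by
    nlinarith only [hs1le, hκε, hs1pos]
  have hfin2 : 1 + cm - ρ*α - sX ≤ (1 + cm - ε)/2 := by
    have hr : s₁ * (1 + cm - ρ*α - sX) ≤ s₁ * ((1 + cm - ε)/2) := by
      calc s₁ * (1 + cm - ρ*α - sX) ≤ ρ*α + α := hfin1
        _ ≤ s₁ * ((1 + cm - ε)/2) := by linarith only [hsin']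
    exact le_of_mul_le_mul_left hr hs1pos
  linarith only [hfin2, h2X, hsin', hs1κ, hα, hε0]
end
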